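/- arXiv:1202.2824 — 2 statements merged into one kernel-verified Lean document; each statement's English description precedes it below -/
import Mathlib

section
/- Let f ∈ L¹_loc(ℝⁿ) be nonnegative, Ω_k = {M^d f > 2^{(n+1)k}} = ∪_j Q_j^k its decomposition into maximal dyadic cubes, and E_j^k = Q_j^k \ Ω_{k+1}. Then for a.e. x, M^d f(x) ≤ 2^{n+1} Σ_{k,j} f_{Q_j^k} χ_{E_j^k}(x), where f_Q = (1/|Q|)∫_Q f. -/
open Set MeasureTheory ENNReal

/-- The standard dyadic cube `2^{-k}([0,1)ⁿ + j)`. -/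
def dCube {n : ℕ} (k : ℤ) (j : Fin n → ℤ) : Set (Fin n → ℝ) :=
  {x | ∀ i, (2:ℝ)^(-k) * (j i : ℝ) ≤ x i ∧ x i < (2:ℝ)^(-k) * ((j i : ℝ) + 1)}

/-- The average `(1/|S|) ∫_S f` of a nonnegative function, as an extended real. -/
noncomputable def eavg {n : ℕ} (f : (Fin n → ℝ) → ℝ) (S : Set (Fin n → ℝ)) : ℝ≥0∞ :=
  (∫⁻ x in S, ENNReal.ofReal (f x)) / volume S

/-- The dyadic maximal operator `M^d f(x) = sup_{x ∈ Q ∈ D} (1/|Q|) ∫_Q f`. -/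
noncomputable def Md {n : ℕ} (f : (Fin n → ℝ) → ℝ) (x : Fin n → ℝ) : ℝ≥0∞ :=
  ⨆ (k : ℤ) (j : Fin n → ℤ) (_ : x ∈ dCube k j), eavg f (dCube k j)

/-! ### Auxiliary lemmas -/

section Aux

variable {n : ℕ}

/-- Floor of a real divided by a positive integer. -/
lemma floor_rdiv_int (a : ℝ) {d : ℤ} (hd : 0 < d) : ⌊a / (d:ℝ)⌋ = ⌊a⌋ / d := by
  have hd' : (0:ℝ) < d := by exact_mod_cast hd
  have hmod := Int.mul_ediv_add_emod ⌊a⌋ d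
  have h1 : 0 ≤ ⌊a⌋ % d := Int.emod_nonneg _ (ne_of_gt hd)
  have h2 : ⌊a⌋ % d < d := Int.emod_lt_of_pos _ hd
  rw [Int.floor_eq_iff]
  constructor
  · rw [le_div_iff₀ hd']
    have : ((⌊a⌋ / d : ℤ) : ℝ) * d ≤ (⌊a⌋ : ℝ) := by
      have : (⌊a⌋ / d) * d ≤ ⌊a⌋ := by nlinarith [hmod, h1]
      exact_mod_cast this
    exact this.trans (Int.floor_le a)
  · rw [div_lt_iff₀ hd']
    have hfl := Int.lt_floor_add_one a
    have h3 : (⌊a⌋ : ℝ) + 1 ≤ ((⌊a⌋ / d : ℤ) : ℝ) * d + d := by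
      have : ⌊a⌋ + 1 ≤ (⌊a⌋ / d) * d + d := by nlinarith [hmod, h2]
      exact_mod_cast this
    push_cast
    linarith

/-- Membership in a dyadic cube, via floors. -/
lemma mem_dCube_iff {k : ℤ} {j : Fin n → ℤ} {x : Fin n → ℝ} :
    x ∈ dCube k j ↔ ∀ i, ⌊(2:ℝ)^k * x i⌋ = j i := by
  have h2 : (0:ℝ) < (2:ℝ)^k := zpow_pos (by norm_num) _
  have hinv : (2:ℝ)^k * (2:ℝ)^(-k) = 1 := by
    rw [← zpow_add₀ (two_ne_zero) k (-k)]; simp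
  unfold dCube
  simp only [mem_setOf_eq]
  refine forall_congr' fun i => ?_
  rw [Int.floor_eq_iff]
  constructor
  · rintro ⟨ha, hb⟩
    constructor
    · have := mul_le_mul_of_nonneg_left ha h2.le
      rwa [← mul_assoc, hinv, one_mul] at this
    · have := mul_lt_mul_of_pos_left hb h2
      rwa [← mul_assoc, hinv, one_mul] at this
  · rintro ⟨ha, hb⟩
    have h2' : (0:ℝ) < (2:ℝ)^(-k) := zpow_pos (by norm_num) _
    have hinv' : (2:ℝ)^(-k) * (2:ℝ)^k = 1 := by
      rw [← zpow_add₀ (two_ne_zero)]; simp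
    constructor
    · have := mul_le_mul_of_nonneg_left ha h2'.le
      rwa [← mul_assoc, hinv', one_mul] at this
    · have := mul_lt_mul_of_pos_left hb h2'
      rwa [← mul_assoc, hinv', one_mul] at this

/-- Dyadic nesting: a smaller cube meeting a bigger one is contained in it. -/
lemma dCube_subset_of_le {K K' : ℤ} {J J' : Fin n → ℤ} (h : K' ≤ K) {x : Fin n → ℝ}
    (hx : x ∈ dCube K J) (hx' : x ∈ dCube K' J') : dCube K J ⊆ dCube K' J' := by
  intro y hy
  rw [mem_dCube_iff] at hx hx' hy ⊢
  intro i
  have key : ∀ u v : ℝ, ⌊(2:ℝ)^K * u⌋ = ⌊(2:ℝ)^K * v⌋ →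
      ⌊(2:ℝ)^K' * u⌋ = ⌊(2:ℝ)^K' * v⌋ := by
    intro u v huv
    obtain ⟨m, hm⟩ : ∃ m : ℕ, K = K' + m := ⟨(K - K').toNat, by omega⟩
    have hd : (0:ℤ) < 2^m := by positivity
    have hrw : ∀ w : ℝ, (2:ℝ)^K' * w = ((2:ℝ)^K * w) / (((2:ℤ)^m : ℤ) : ℝ) := by
      intro w
      rw [hm, zpow_add₀ (two_ne_zero : (2:ℝ) ≠ 0)]
      push_cast
      rw [zpow_natCast]
      field_simp
    rw [hrw u, hrw v, floor_rdiv_int _ hd, floor_rdiv_int _ hd, huv]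
  have := key (y i) (x i) (by rw [hy i, hx i])
  rw [this, hx' i]

/-- Two dyadic cubes with a common point are nested. -/
lemma dCube_nested {K K' : ℤ} {J J' : Fin n → ℤ} {x : Fin n → ℝ}
    (hx : x ∈ dCube K J) (hx' : x ∈ dCube K' J') :
    dCube K J ⊆ dCube K' J' ∨ dCube K' J' ⊆ dCube K J := by
  rcases le_total K' K with h | h
  · exact Or.inl (dCube_subset_of_le h hx hx')
  · exact Or.inr (dCube_subset_of_le h hx' hx)

lemma dCube_eq_pi (k : ℤ) (j : Fin n → ℤ) :
    dCube k j = Set.pi Set.univ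
      (fun i => Ico ((2:ℝ)^(-k) * (j i : ℝ)) ((2:ℝ)^(-k) * ((j i : ℝ) + 1))) := by
  ext x
  simp [dCube, Set.mem_pi]

lemma measurableSet_dCube (k : ℤ) (j : Fin n → ℤ) : MeasurableSet (dCube k j) := by
  rw [dCube_eq_pi]
  exact MeasurableSet.univ_pi fun i => measurableSet_Ico

lemma volume_dCube (k : ℤ) (j : Fin n → ℤ) :
    volume (dCube k j) = ENNReal.ofReal ((2:ℝ)^(-k)) ^ n := by
  rw [dCube_eq_pi, volume_pi_pi]
  have h : ∀ i : Fin n, (2:ℝ)^(-k) * ((j i : ℝ) + 1) - (2:ℝ)^(-k) * (j i : ℝ)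
      = (2:ℝ)^(-k) := fun i => by ring
  simp only [Real.volume_Ico, h, Finset.prod_const, Finset.card_univ, Fintype.card_fin]

lemma volume_dCube_ne_zero (k : ℤ) (j : Fin n → ℤ) : volume (dCube (n := n) k j) ≠ 0 := by
  rw [volume_dCube]
  apply pow_ne_zero
  simp only [ne_eq, ENNReal.ofReal_eq_zero, not_le]
  positivity

lemma volume_dCube_ne_top (k : ℤ) (j : Fin n → ℤ) : volume (dCube (n := n) k j) ≠ ∞ :=
  (volume_dCube k j) ▸ (ENNReal.pow_lt_top ENNReal.ofReal_lt_top).ne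

lemma lintegral_dCube_lt_top {f : (Fin n → ℝ) → ℝ} (hf : LocallyIntegrable f)
    (k : ℤ) (j : Fin n → ℤ) : ∫⁻ x in dCube k j, ENNReal.ofReal (f x) < ∞ := by
  have hsub : dCube k j ⊆ Icc (fun i => (2:ℝ)^(-k) * (j i : ℝ))
      (fun i => (2:ℝ)^(-k) * ((j i : ℝ) + 1)) := by
    intro x hx
    exact ⟨fun i => (hx i).1, fun i => (hx i).2.le⟩
  have hint : IntegrableOn f (dCube k j) volume :=
    (hf.integrableOn_isCompact isCompact_Icc).mono_set hsub
  exact hint.setLIntegral_lt_top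

lemma eavg_dCube_ne_top {f : (Fin n → ℝ) → ℝ} (hf : LocallyIntegrable f)
    (k : ℤ) (j : Fin n → ℤ) : eavg f (dCube k j) ≠ ∞ :=
  (ENNReal.div_lt_top (lintegral_dCube_lt_top hf k j).ne (volume_dCube_ne_zero k j)).ne

/-! ### Powers of two -/

lemma two_zpow_ne_zero (a : ℤ) : (2:ℝ≥0∞) ^ a ≠ 0 :=
  (ENNReal.zpow_pos (two_ne_zero) (ENNReal.ofNat_ne_top) a).ne'

lemma two_zpow_ne_top (a : ℤ) : (2:ℝ≥0∞) ^ a ≠ ∞ :=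
  (ENNReal.zpow_lt_top (two_ne_zero) (ENNReal.ofNat_ne_top) a).ne

lemma two_zpow_lt_two_zpow {a b : ℤ} (h : a < b) : (2:ℝ≥0∞) ^ a < (2:ℝ≥0∞) ^ b := by
  calc (2:ℝ≥0∞) ^ a = 1 * (2:ℝ≥0∞) ^ a := (one_mul _).symm
  _ < 2 * (2:ℝ≥0∞) ^ a :=
      ENNReal.mul_lt_mul_left (two_zpow_ne_zero a) (two_zpow_ne_top a) one_lt_two
  _ = (2:ℝ≥0∞) ^ (a + 1) := by
      rw [ENNReal.zpow_add (two_ne_zero) (ENNReal.ofNat_ne_top), zpow_one, mul_comm]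
  _ ≤ (2:ℝ≥0∞) ^ b := ENNReal.zpow_le_of_le one_le_two (by omega)

lemma exists_two_zpow_gt {n : ℕ} {b : ℝ≥0∞} (hb : b ≠ ∞) :
    ∃ k : ℤ, 1 ≤ k ∧ b < (2:ℝ≥0∞) ^ (((n:ℤ)+1) * k) := by
  obtain ⟨N, hN⟩ := ENNReal.exists_nat_gt hb
  refine ⟨(N:ℤ) + 1, by omega, ?_⟩
  have h1 : b < (2:ℝ≥0∞) ^ ((N:ℤ) + 1) := by
    have h2 : (N:ℝ≥0∞) ≤ (2:ℝ≥0∞) ^ ((N:ℤ) + 1) := by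
      have h3 : (N:ℕ) ≤ 2 ^ (N + 1) := (Nat.lt_two_pow_self (n := N)).le.trans
        (Nat.pow_le_pow_right (by norm_num) (by omega))
      calc (N:ℝ≥0∞) ≤ ((2 ^ (N+1) : ℕ) : ℝ≥0∞) := by exact_mod_cast h3
      _ = (2:ℝ≥0∞) ^ ((N:ℤ) + 1) := by
          push_cast
          rw [← zpow_natCast (2:ℝ≥0∞) (N+1)]
          push_cast
          ring_nf
    exact hN.trans_le h2
  refine h1.trans_le (ENNReal.zpow_le_of_le one_le_two ?_)
  have : (0:ℤ) ≤ n := Int.natCast_nonneg n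
  nlinarith [this]

lemma exists_bracket {n : ℕ} {x : ℝ≥0∞} (h0 : x ≠ 0) (htop : x ≠ ∞) :
    ∃ k : ℤ, (2:ℝ≥0∞) ^ (((n:ℤ)+1) * k) < x ∧ x ≤ (2:ℝ≥0∞) ^ (((n:ℤ)+1) * (k+1)) := by
  obtain ⟨m, hm1, hm2⟩ := ENNReal.exists_mem_Ico_zpow h0 htop (one_lt_two) (ENNReal.ofNat_ne_top)
  -- hm1 : 2^m ≤ x, hm2 : x < 2^(m+1)
  have hnn : (0:ℤ) ≤ n := Int.natCast_nonneg n
  set P : ℤ → Prop := fun k => (2:ℝ≥0∞) ^ (((n:ℤ)+1) * k) < x with hP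
  have hinh : ∃ k, P k := by
    refine ⟨min (m - 1) 0, ?_⟩
    have hle : ((n:ℤ)+1) * min (m - 1) 0 ≤ m - 1 := by
      rcases le_total (m - 1) 0 with h | h
      · rw [min_eq_left h]; nlinarith
      · rw [min_eq_right h]; nlinarith
    calc (2:ℝ≥0∞) ^ (((n:ℤ)+1) * min (m - 1) 0) ≤ (2:ℝ≥0∞) ^ (m - 1) :=
        ENNReal.zpow_le_of_le one_le_two hle
    _ < (2:ℝ≥0∞) ^ m := two_zpow_lt_two_zpow (by omega)
    _ ≤ x := hm1
  have hbdd : ∃ b : ℤ, ∀ k : ℤ, P k → k ≤ b := by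
    refine ⟨max (m + 1) 1, fun k hk => ?_⟩
    by_contra hgt
    push_neg at hgt
    have hk1 : 1 ≤ k := by omega
    have hkm : m + 1 ≤ k := by omega
    have : (2:ℝ≥0∞) ^ (m+1) ≤ (2:ℝ≥0∞) ^ (((n:ℤ)+1) * k) :=
      ENNReal.zpow_le_of_le one_le_two (by nlinarith)
    exact absurd (hk.trans hm2) (not_lt.2 this)
  obtain ⟨k, hk, hkmax⟩ := Int.exists_greatest_of_bdd hbdd hinh
  refine ⟨k, hk, ?_⟩
  by_contra hlt
  push_neg at hlt
  have := hkmax (k+1) hlt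
  omega

end Aux

/-- Let `f ≥ 0` be locally integrable and let `Ω_k = {M^d f > 2^{(n+1)k}} = ∪_j Q_j^k` be the
decomposition of `Ω_k` into maximal dyadic cubes, `E_j^k = Q_j^k \ Ω_{k+1}`. Then for
a.e. `x`, `M^d f(x) ≤ 2^{n+1} Σ_{k,j} f_{Q_j^k} χ_{E_j^k}(x)`. -/
theorem stmt7 {n : ℕ} (f : (Fin n → ℝ) → ℝ) (hf : LocallyIntegrable f)
    (hf0 : ∀ x, 0 ≤ f x) (Q : ℤ → ℕ → Set (Fin n → ℝ))
    (hQ : ∀ k j, Q k j = ∅ ∨ ∃ (K : ℤ) (J : Fin n → ℤ), Q k j = dCube K J ∧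
      (2:ℝ≥0∞)^(((n:ℤ)+1)*k) < eavg f (dCube K J) ∧
      ∀ (K' : ℤ) (J' : Fin n → ℤ), dCube K J ⊆ dCube K' J' →
        dCube (n := n) K J ≠ dCube K' J' →
        eavg f (dCube K' J') ≤ (2:ℝ≥0∞)^(((n:ℤ)+1)*k))
    (hcover : ∀ k : ℤ, {x | (2:ℝ≥0∞)^(((n:ℤ)+1)*k) < Md f x} = ⋃ j, Q k j) :
    ∀ᵐ x ∂volume, Md f x ≤ (2:ℝ≥0∞)^(n+1) *
      ∑' (p : ℤ × ℕ),
        (Q p.1 p.2 \ ⋃ j, Q (p.1+1) j).indicator (fun _ => eavg f (Q p.1 p.2)) x := by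
  classical
  have hTsucc : ∀ k : ℤ, (2:ℝ≥0∞)^(((n:ℤ)+1)*(k+1)) = (2:ℝ≥0∞)^(n+1) * (2:ℝ≥0∞)^(((n:ℤ)+1)*k) := by
    intro k
    rw [show ((n:ℤ)+1)*(k+1) = ((n:ℤ)+1) + ((n:ℤ)+1)*k by ring,
      ENNReal.zpow_add (two_ne_zero) (ENNReal.ofNat_ne_top),
      show ((n:ℤ)+1) = ((n+1:ℕ):ℤ) by omega, zpow_natCast]
  -- The set where all thresholds are exceeded is null.
  have hnull : volume (⋂ k : ℤ, {x : Fin n → ℝ | (2:ℝ≥0∞)^(((n:ℤ)+1)*k) < Md f x}) = 0 := by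
    set N := ⋂ k : ℤ, {x : Fin n → ℝ | (2:ℝ≥0∞)^(((n:ℤ)+1)*k) < Md f x} with hNdef
    have hNsub : N ⊆ ⋃ j, Q 0 j := by
      rw [← hcover 0]
      intro x hx
      exact mem_iInter.1 hx 0
    have hmain : ∀ j0, volume (N ∩ Q 0 j0) = 0 := by
      intro j0
      rcases hQ 0 j0 with h0 | ⟨K0, J0, hQ0, havg0, hmax0⟩
      · simp [h0]
      rw [hQ0]
      have hI0 : ∫⁻ x in dCube K0 J0, ENNReal.ofReal (f x) < ∞ :=
        lintegral_dCube_lt_top hf _ _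
      have havgQ0 : eavg f (dCube K0 J0) ≠ ∞ := eavg_dCube_ne_top hf _ _
      -- key estimate
      have key : ∀ k : ℤ, 1 ≤ k → eavg f (dCube K0 J0) < (2:ℝ≥0∞)^(((n:ℤ)+1)*k) →
          volume (N ∩ dCube K0 J0) ≤
            (∫⁻ x in dCube K0 J0, ENNReal.ofReal (f x)) / (2:ℝ≥0∞)^(((n:ℤ)+1)*k) := by
        intro k hk1 hkavg
        set T := (2:ℝ≥0∞)^(((n:ℤ)+1)*k) with hT
        set S : Set (Set (Fin n → ℝ)) :=
          {C | (∃ j, Q k j = C) ∧ (∃ K J, C = dCube (n := n) K J) ∧ C ⊆ dCube K0 J0 ∧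
            T < eavg f C} with hSdef
        have hcount : S.Countable :=
          (countable_range (Q k)).mono (fun C hC => hC.1)
        have hmeasS : ∀ C : S, MeasurableSet (C : Set (Fin n → ℝ)) := by
          rintro ⟨C, hC⟩
          obtain ⟨K, J, rfl⟩ := hC.2.1
          exact measurableSet_dCube K J
        have hdisj : S.Pairwise Disjoint := by
          intro C hC C' hC' hne
          by_contra hnd
          obtain ⟨x, hxC, hxC'⟩ := Set.not_disjoint_iff.1 hnd
          obtain ⟨j, hj⟩ := hC.1
          obtain ⟨j', hj'⟩ := hC'.1
          rcases hQ k j with he | ⟨Ka, Ja, hQa, havga, hmaxa⟩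
          · rw [he] at hj; rw [← hj] at hxC; exact absurd hxC (notMem_empty x)
          rcases hQ k j' with he' | ⟨Kb, Jb, hQb, havgb, hmaxb⟩
          · rw [he'] at hj'; rw [← hj'] at hxC'; exact absurd hxC' (notMem_empty x)
          have hEa : C = dCube Ka Ja := by rw [← hj, hQa]
          have hEb : C' = dCube Kb Jb := by rw [← hj', hQb]
          subst hEa
          subst hEb
          rcases dCube_nested hxC hxC' with hsub | hsub
          · exact absurd (hmaxa Kb Jb hsub hne) (not_le.2 havgb)
          · exact absurd (hmaxb Ka Ja hsub (fun h => hne h.symm)) (not_le.2 havga)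
        have hsub2 : N ∩ dCube K0 J0 ⊆ ⋃₀ S := by
          rintro x ⟨hxN, hxQ0⟩
          have hxk : x ∈ ⋃ j, Q k j := by
            rw [← hcover k]
            exact mem_iInter.1 hxN k
          obtain ⟨j, hxj⟩ := mem_iUnion.1 hxk
          rcases hQ k j with he | ⟨K, J, hQj, havgj, hmaxj⟩
          · rw [he] at hxj; exact absurd hxj (notMem_empty x)
          rw [hQj] at hxj
          rcases dCube_nested hxj hxQ0 with hsub | hsup
          · exact ⟨dCube K J, ⟨⟨j, hQj⟩, ⟨K, J, rfl⟩, hsub, havgj⟩, hxj⟩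
          · rcases eq_or_ne (dCube K0 J0) (dCube K J) with heq | hne'
            · rw [← heq] at havgj
              exact absurd hkavg (not_lt.2 havgj.le)
            · have h1 := hmax0 K J hsup hne'
              have h2 : (2:ℝ≥0∞)^(((n:ℤ)+1)*(0:ℤ)) ≤ T := by
                rw [hT]
                exact ENNReal.zpow_le_of_le one_le_two (by nlinarith [Int.natCast_nonneg n])
              exact absurd havgj (not_lt.2 (h1.trans h2))
        have hTne0 : T ≠ 0 := two_zpow_ne_zero _
        have hTnetop : T ≠ ∞ := two_zpow_ne_top _
        haveI := hcount.to_subtype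
        calc volume (N ∩ dCube K0 J0) ≤ volume (⋃₀ S) := measure_mono hsub2
        _ = volume (⋃ C : S, (C : Set (Fin n → ℝ))) := by rw [sUnion_eq_iUnion]
        _ ≤ ∑' C : S, volume (C : Set (Fin n → ℝ)) := measure_iUnion_le _
        _ ≤ ∑' C : S, (∫⁻ x in (C : Set (Fin n → ℝ)), ENNReal.ofReal (f x)) / T := by
            refine ENNReal.tsum_le_tsum (fun C => ?_)
            obtain ⟨C, hC⟩ := C
            obtain ⟨K, J, hCKJ⟩ := hC.2.1
            have hV0 : volume C ≠ 0 := by rw [hCKJ]; exact volume_dCube_ne_zero K J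
            have hVtop : volume C ≠ ∞ := by rw [hCKJ]; exact volume_dCube_ne_top K J
            have havg : T < eavg f C := hC.2.2.2
            have h1 : T * volume C ≤ ∫⁻ x in C, ENNReal.ofReal (f x) :=
              (ENNReal.le_div_iff_mul_le (Or.inl hV0) (Or.inl hVtop)).1 havg.le
            exact (ENNReal.le_div_iff_mul_le (Or.inl hTne0) (Or.inl hTnetop)).2
              (by rwa [mul_comm] at h1)
        _ = (∑' C : S, ∫⁻ x in (C : Set (Fin n → ℝ)), ENNReal.ofReal (f x)) / T := by
            simp_rw [div_eq_mul_inv]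
            rw [ENNReal.tsum_mul_right]
        _ = (∫⁻ x in ⋃ C : S, (C : Set (Fin n → ℝ)), ENNReal.ofReal (f x)) / T := by
            rw [lintegral_iUnion hmeasS (hdisj.subtype _ _)]
        _ ≤ (∫⁻ x in dCube K0 J0, ENNReal.ofReal (f x)) / T := by
            exact ENNReal.div_le_div_right
              (lintegral_mono_set (iUnion_subset (fun C => C.2.2.2.1))) _
      -- conclude by contradiction
      by_contra hpos
      have hm0 : volume (N ∩ dCube K0 J0) ≠ 0 := hpos
      have hmtop : volume (N ∩ dCube K0 J0) ≠ ∞ :=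
        ((measure_mono inter_subset_right).trans_lt
          (lt_of_le_of_ne le_top (volume_dCube_ne_top K0 J0))).ne
      have hb2 : (∫⁻ x in dCube K0 J0, ENNReal.ofReal (f x)) / volume (N ∩ dCube K0 J0) ≠ ∞ :=
        (ENNReal.div_lt_top hI0.ne hm0).ne
      have hbne : max (eavg f (dCube K0 J0))
          ((∫⁻ x in dCube K0 J0, ENNReal.ofReal (f x)) / volume (N ∩ dCube K0 J0)) ≠ ∞ :=
        (max_lt (lt_top_iff_ne_top.2 havgQ0) (lt_top_iff_ne_top.2 hb2)).ne
      obtain ⟨k, hk1, hklt⟩ := exists_two_zpow_gt (n := n) hbne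
      have hT1 : eavg f (dCube K0 J0) < (2:ℝ≥0∞)^(((n:ℤ)+1)*k) :=
        (le_max_left _ _).trans_lt hklt
      have hT2 : (∫⁻ x in dCube K0 J0, ENNReal.ofReal (f x)) / volume (N ∩ dCube K0 J0)
          < (2:ℝ≥0∞)^(((n:ℤ)+1)*k) := (le_max_right _ _).trans_lt hklt
      have hkey := key k hk1 hT1
      have hlt : (∫⁻ x in dCube K0 J0, ENNReal.ofReal (f x)) / (2:ℝ≥0∞)^(((n:ℤ)+1)*k)
          < volume (N ∩ dCube K0 J0) := by
        rw [ENNReal.div_lt_iff (Or.inl (two_zpow_ne_zero _)) (Or.inl (two_zpow_ne_top _))]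
        rw [ENNReal.div_lt_iff (Or.inl hm0) (Or.inl hmtop)] at hT2
        rwa [mul_comm] at hT2
      exact absurd hkey (not_le.2 hlt)
    have hNeq : N = ⋃ j0, N ∩ Q 0 j0 := by
      rw [← inter_iUnion]
      exact (inter_eq_self_of_subset_left hNsub).symm
    rw [hNeq]
    exact measure_iUnion_null hmain
  -- main argument
  have hae : ∀ᵐ x ∂(volume : Measure (Fin n → ℝ)),
      x ∉ ⋂ k : ℤ, {x : Fin n → ℝ | (2:ℝ≥0∞)^(((n:ℤ)+1)*k) < Md f x} :=
    measure_eq_zero_iff_ae_notMem.1 hnull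
  filter_upwards [hae] with x hxN
  rw [mem_iInter] at hxN
  push_neg at hxN
  obtain ⟨k₀, hk₀⟩ := hxN
  have hk₀' : Md f x ≤ (2:ℝ≥0∞)^(((n:ℤ)+1)*k₀) := not_lt.1 hk₀
  have htop : Md f x ≠ ∞ := (hk₀'.trans_lt (ENNReal.zpow_lt_top two_ne_zero ENNReal.ofNat_ne_top _)).ne
  rcases eq_or_ne (Md f x) 0 with h0 | h0
  · exact le_of_eq_of_le h0 zero_le
  obtain ⟨k, hk1, hk2⟩ := exists_bracket (n := n) h0 htop
  have hxΩ : x ∈ ⋃ j, Q k j := by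
    rw [← hcover k]
    exact hk1
  obtain ⟨j, hxj⟩ := mem_iUnion.1 hxΩ
  have hxnot : x ∉ ⋃ j', Q (k+1) j' := by
    rw [← hcover (k+1)]
    exact not_lt.2 hk2
  rcases hQ k j with he | ⟨K, J, hQj, havgj, -⟩
  · rw [he] at hxj; exact absurd hxj (notMem_empty x)
  have hmem : x ∈ Q k j \ ⋃ j', Q (k+1) j' := ⟨hxj, hxnot⟩
  calc Md f x ≤ (2:ℝ≥0∞)^(((n:ℤ)+1)*(k+1)) := hk2
  _ = (2:ℝ≥0∞)^(n+1) * (2:ℝ≥0∞)^(((n:ℤ)+1)*k) := hTsucc k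
  _ ≤ (2:ℝ≥0∞)^(n+1) * eavg f (Q k j) := by
      refine mul_le_mul_right ?_ _
      rw [hQj]
      exact havgj.le
  _ = (2:ℝ≥0∞)^(n+1) *
      ((Q k j \ ⋃ j', Q (k+1) j').indicator (fun _ => eavg f (Q k j)) x) := by
      rw [Set.indicator_of_mem hmem]
  _ ≤ (2:ℝ≥0∞)^(n+1) * ∑' (p : ℤ × ℕ),
      (Q p.1 p.2 \ ⋃ j', Q (p.1+1) j').indicator (fun _ => eavg f (Q p.1 p.2)) x :=
      mul_le_mul_right (ENNReal.le_tsum (k, j)) _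
end

section
/- Let {Q_j^k} be a sparse family of cubes in a dyadic grid D and define the sparse operator A f = Σ_{k,j} f_{Q_j^k} χ_{Q_j^k}, where f_Q = (1/|Q|)∫_Q f. Then for nonnegative f, g ∈ L²(ℝⁿ): ∫ (A f) g dx ≤ 2 ∫ (M f)(M g) dx, where M is the Hardy–Littlewood maximal operator. Consequently ‖A f‖_{L²} ≤ C(n) ‖f‖_{L²}. -/
open Set MeasureTheory ENNReal NNReal

/-- The cube `a + [0, ℓ)ⁿ`. -/
def cubeOf {n : ℕ} (a : Fin n → ℝ) (ℓ : ℝ) : Set (Fin n → ℝ) :=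
  {y | ∀ i, a i ≤ y i ∧ y i < a i + ℓ}

/-- A general dyadic grid: a collection of cubes of sidelengths `2^k` which are pairwise
nested or disjoint and such that the cubes of each fixed sidelength cover `ℝⁿ`. -/
structure IsDyadicGrid {n : ℕ} (D : Set (Set (Fin n → ℝ))) : Prop where
  cube : ∀ Q ∈ D, ∃ (a : Fin n → ℝ) (k : ℤ), Q = cubeOf a ((2:ℝ)^k)
  nested : ∀ Q ∈ D, ∀ R ∈ D, Q ⊆ R ∨ R ⊆ Q ∨ Q ∩ R = ∅
  covers : ∀ (k : ℤ) (x : Fin n → ℝ), ∃ Q ∈ D, (∃ a, Q = cubeOf a ((2:ℝ)^k)) ∧ x ∈ Q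

/-- A sparse family `{Q_j^k}` of cubes from the grid `D`: the cubes at each level `k` are
pairwise disjoint, `Ω_{k+1} ⊆ Ω_k` for `Ω_k = ∪_j Q_j^k`, and
`|Ω_{k+1} ∩ Q_j^k| ≤ |Q_j^k|/2`. -/
structure IsSparseIn {n : ℕ} (D : Set (Set (Fin n → ℝ))) (Q : ℤ → ℕ → Set (Fin n → ℝ)) :
    Prop where
  mem : ∀ k j, Q k j ∈ D ∨ Q k j = ∅
  disj : ∀ k, ∀ j j', j ≠ j' → Disjoint (Q k j) (Q k j')
  nest : ∀ k, (⋃ j, Q (k+1) j) ⊆ ⋃ j, Q k j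
  sparse : ∀ k j, volume ((⋃ i, Q (k+1) i) ∩ Q k j) ≤ volume (Q k j) / 2

/-- The sparse operator `A f = Σ_{k,j} f_{Q_j^k} χ_{Q_j^k}`. -/
noncomputable def sparseOp {n : ℕ} (Q : ℤ → ℕ → Set (Fin n → ℝ))
    (f : (Fin n → ℝ) → ℝ≥0∞) (x : Fin n → ℝ) : ℝ≥0∞ :=
  ∑' p : ℤ × ℕ,
    (Q p.1 p.2).indicator (fun _ => (∫⁻ y in Q p.1 p.2, f y) / volume (Q p.1 p.2)) x

/-- The Hardy–Littlewood maximal operator over cubes. -/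
noncomputable def MHL {n : ℕ} (f : (Fin n → ℝ) → ℝ≥0∞) (x : Fin n → ℝ) : ℝ≥0∞ :=
  ⨆ (a : Fin n → ℝ) (ℓ : ℝ) (_ : 0 < ℓ) (_ : x ∈ cubeOf a ℓ),
    (∫⁻ y in cubeOf a ℓ, f y) / volume (cubeOf a ℓ)

section Geo
variable {n : ℕ}

lemma cubeOf_eq_pi (a : Fin n → ℝ) (ℓ : ℝ) :
    cubeOf a ℓ = Set.pi Set.univ (fun i => Set.Ico (a i) (a i + ℓ)) := by
  ext y; simp [cubeOf, Set.mem_pi, Set.mem_Ico]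

lemma measurableSet_cubeOf (a : Fin n → ℝ) (ℓ : ℝ) : MeasurableSet (cubeOf a ℓ) := by
  rw [cubeOf_eq_pi]; exact MeasurableSet.univ_pi fun i => measurableSet_Ico

lemma volume_cubeOf (a : Fin n → ℝ) (ℓ : ℝ) :
    volume (cubeOf a ℓ) = ENNReal.ofReal ℓ ^ n := by
  rw [cubeOf_eq_pi, volume_pi_pi]
  simp [Real.volume_Ico]

lemma volume_cubeOf_lt_top (a : Fin n → ℝ) (ℓ : ℝ) : volume (cubeOf a ℓ) < ∞ := by
  rw [volume_cubeOf]
  exact ENNReal.pow_lt_top ENNReal.ofReal_lt_top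

lemma volume_cubeOf_pos (a : Fin n → ℝ) {ℓ : ℝ} (hℓ : 0 < ℓ) : 0 < volume (cubeOf a ℓ) := by
  rw [volume_cubeOf]
  exact ENNReal.pow_pos (ENNReal.ofReal_pos.2 hℓ) _

lemma self_mem_cubeOf (a : Fin n → ℝ) {ℓ : ℝ} (hℓ : 0 < ℓ) : a ∈ cubeOf a ℓ :=
  fun i => ⟨le_rfl, by linarith⟩

lemma cubeOf_subset_rigid {a b : Fin n → ℝ} {ℓ ℓ' : ℝ} (hℓ : 0 < ℓ) (hle : ℓ' ≤ ℓ)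
    (h : cubeOf a ℓ ⊆ cubeOf b ℓ') : cubeOf a ℓ = cubeOf b ℓ' := by
  rcases Nat.eq_zero_or_pos n with hn | hn
  · have h0 : ∀ (c : Fin n → ℝ) (m : ℝ), cubeOf c m = Set.univ := by
      intro c m; ext y; simp only [cubeOf, mem_setOf_eq, mem_univ, iff_true]
      intro i; exact absurd i.2 (by omega)
    rw [h0, h0]
  · have key : ∀ i, Set.Ico (a i) (a i + ℓ) ⊆ Set.Ico (b i) (b i + ℓ') := by
      intro i t ht
      have hy : (fun j => if j = i then t else a j) ∈ cubeOf a ℓ := by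
        intro j; by_cases hj : j = i
        · subst hj; simpa using ht
        · simp only [if_neg hj]; exact ⟨le_rfl, by linarith⟩
      have h2 := h hy i
      simpa using h2
    have hab : ∀ i, b i ≤ a i ∧ a i + ℓ ≤ b i + ℓ' := by
      intro i
      exact (Set.Ico_subset_Ico_iff (by linarith : a i < a i + ℓ)).1 (key i)
    obtain ⟨i0⟩ : Nonempty (Fin n) := ⟨⟨0, hn⟩⟩
    have hll : ℓ = ℓ' := by
      have h1 := (hab i0).1; have h2 := (hab i0).2; linarith
    have hab' : a = b := by
      funext i; have h1 := (hab i).1; have h2 := (hab i).2; linarith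
    rw [hll, hab']

end Geo

section Helpers
variable {n : ℕ}

/-- pointwise `f ≤ f² + 1` in `ℝ≥0∞`. -/
lemma ennreal_le_sq_add_one (x : ℝ≥0∞) : x ≤ x ^ 2 + 1 := by
  rcases le_total x 1 with h | h
  · exact h.trans le_add_self
  · calc x = x * 1 := (mul_one x).symm
      _ ≤ x * x := by gcongr
      _ = x ^ 2 := (sq x).symm
      _ ≤ x ^ 2 + 1 := le_self_add

/-- `∫_Q f ≤ ∫ f² + |Q|`. -/
lemma setLintegral_le_sq_add (f : (Fin n → ℝ) → ℝ≥0∞) (s : Set (Fin n → ℝ)) :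
    ∫⁻ x in s, f x ≤ (∫⁻ x, f x ^ 2) + volume s := by
  calc ∫⁻ x in s, f x ≤ ∫⁻ x in s, (f x ^ 2 + 1) :=
        lintegral_mono fun x => ennreal_le_sq_add_one (f x)
    _ = (∫⁻ x in s, f x ^ 2) + ∫⁻ _ in s, (1:ℝ≥0∞) := lintegral_add_right _ measurable_const
    _ ≤ (∫⁻ x, f x ^ 2) + volume s := by
        gcongr
        · exact Measure.restrict_le_self
        · simp [setLIntegral_const]

lemma ennreal_add_sq_le (u v : ℝ≥0∞) : (u + v) ^ 2 ≤ 4 * (u ^ 2 + v ^ 2) := by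
  have h1 : u + v ≤ 2 * max u v := by
    rw [two_mul]; exact add_le_add (le_max_left _ _) (le_max_right _ _)
  calc (u + v) ^ 2 ≤ (2 * max u v) ^ 2 := by gcongr
    _ = 4 * (max u v) ^ 2 := by rw [mul_pow]; norm_num
    _ ≤ 4 * (u ^ 2 + v ^ 2) := by
        gcongr
        rcases le_total u v with h | h
        · rw [max_eq_right h]; exact le_add_self
        · rw [max_eq_left h]; exact le_self_add

end Helpers

section MSdef
variable {n : ℕ}

/-- Maximal function over the countable family of cubes. -/
noncomputable def MS (Q : ℤ → ℕ → Set (Fin n → ℝ)) (f : (Fin n → ℝ) → ℝ≥0∞)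
    (x : Fin n → ℝ) : ℝ≥0∞ :=
  ⨆ p : ℤ × ℕ, (Q p.1 p.2).indicator
    (fun _ => (∫⁻ y in Q p.1 p.2, f y) / volume (Q p.1 p.2)) x

lemma measurable_MS (Q : ℤ → ℕ → Set (Fin n → ℝ))
    (hQ : ∀ p : ℤ × ℕ, MeasurableSet (Q p.1 p.2)) (f : (Fin n → ℝ) → ℝ≥0∞) :
    Measurable (MS Q f) :=
  Measurable.iSup fun p => measurable_const.indicator (hQ p)

lemma avg_le_MS (Q : ℤ → ℕ → Set (Fin n → ℝ)) (f : (Fin n → ℝ) → ℝ≥0∞)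
    {p : ℤ × ℕ} {x : Fin n → ℝ} (hx : x ∈ Q p.1 p.2) :
    (∫⁻ y in Q p.1 p.2, f y) / volume (Q p.1 p.2) ≤ MS Q f x := by
  refine le_iSup_of_le p ?_
  rw [Set.indicator_of_mem hx]

/-- If `MS Q f x > lam` then some cube of the family containing `x` has average `> lam`. -/
lemma exists_of_lt_MS {Q : ℤ → ℕ → Set (Fin n → ℝ)} {f : (Fin n → ℝ) → ℝ≥0∞}
    {x : Fin n → ℝ} {lam : ℝ≥0∞} (h : lam < MS Q f x) :
    ∃ p : ℤ × ℕ, x ∈ Q p.1 p.2 ∧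
      lam < (∫⁻ y in Q p.1 p.2, f y) / volume (Q p.1 p.2) := by
  obtain ⟨p, hp⟩ := lt_iSup_iff.1 h
  by_cases hx : x ∈ Q p.1 p.2
  · exact ⟨p, hx, by rwa [Set.indicator_of_mem hx] at hp⟩
  · rw [Set.indicator_of_notMem hx] at hp
    exact absurd hp (by simp)

lemma avg_le_MHL {f : (Fin n → ℝ) → ℝ≥0∞} {a : Fin n → ℝ} {ℓ : ℝ} (hl : 0 < ℓ)
    {x : Fin n → ℝ} (hx : x ∈ cubeOf a ℓ) :
    (∫⁻ y in cubeOf a ℓ, f y) / volume (cubeOf a ℓ) ≤ MHL f x :=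
  le_iSup_of_le a <| le_iSup_of_le ℓ <| le_iSup_of_le hl <| le_iSup_of_le hx le_rfl

/-- restricted integral of `f` over `{lam < 2f}` is at most `2/lam ∫ f²`. -/
lemma setLintegral_gt_le {f : (Fin n → ℝ) → ℝ≥0∞} (hf : Measurable f) {lam : ℝ≥0∞}
    (h0 : lam ≠ 0) (ht : lam ≠ ∞) :
    ∫⁻ x in {y | lam < 2 * f y}, f x ≤ 2 / lam * ∫⁻ x, f x ^ 2 := by
  have hms : MeasurableSet {y | lam < 2 * f y} :=
    measurableSet_lt measurable_const (measurable_const.mul hf)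
  calc ∫⁻ x in {y | lam < 2 * f y}, f x
      ≤ ∫⁻ x in {y | lam < 2 * f y}, 2 / lam * f x ^ 2 := by
        refine setLIntegral_mono' hms fun x hx => ?_
        have hle : lam ≤ 2 * f x := le_of_lt hx
        have h1 : (1:ℝ≥0∞) ≤ 2 * f x / lam := by
          rw [ENNReal.le_div_iff_mul_le (Or.inl h0) (Or.inl ht), one_mul]; exact hle
        calc f x = f x * 1 := (mul_one _).symm
          _ ≤ f x * (2 * f x / lam) := by gcongr
          _ = 2 / lam * f x ^ 2 := by
              rw [div_eq_mul_inv, div_eq_mul_inv, sq]; ring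
    _ ≤ ∫⁻ x, 2 / lam * f x ^ 2 := setLIntegral_le_lintegral _ _
    _ = 2 / lam * ∫⁻ x, f x ^ 2 := lintegral_const_mul _ (hf.pow_const 2)

end MSdef

section IntLemmas

lemma int_le_two_zpow (m : ℤ) : (m : ℝ) ≤ (2:ℝ) ^ m := by
  rcases le_or_gt m 0 with h | h
  · calc (m:ℝ) ≤ 0 := by exact_mod_cast h
      _ ≤ (2:ℝ) ^ m := le_of_lt (zpow_pos two_pos m)
  · have hm : m = (m.toNat : ℤ) := (Int.toNat_of_nonneg h.le).symm
    rw [hm, zpow_natCast]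
    calc ((m.toNat : ℤ) : ℝ) = (m.toNat : ℝ) := by push_cast; ring
      _ ≤ (2:ℝ) ^ m.toNat := by
          have : m.toNat < 2 ^ m.toNat := Nat.lt_two_pow_self
          exact_mod_cast this.le

/-- side length exponent bound from a volume bound (n ≥ 1). -/
lemma zpow_exp_bound {n : ℕ} (hn : 0 < n) {m : ℤ} {B : ℝ≥0∞} (hB : B ≠ ∞)
    (h : ENNReal.ofReal ((2:ℝ) ^ m) ^ n ≤ B) : m ≤ max 0 ⌈B.toReal⌉ := by
  rcases le_or_gt m 0 with h0 | h0
  · exact h0.trans (le_max_left _ _)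
  · have hpow : ENNReal.ofReal (((2:ℝ) ^ m) ^ n) ≤ B := by
      rwa [ENNReal.ofReal_pow (le_of_lt (zpow_pos two_pos m))]
    have hr : ((2:ℝ) ^ m) ^ n ≤ B.toReal :=
      (ENNReal.ofReal_le_iff_le_toReal hB).1 hpow
    have h1 : (1:ℝ) ≤ (2:ℝ) ^ m := one_le_zpow₀ one_le_two h0.le
    have h2 : (2:ℝ) ^ m ≤ ((2:ℝ) ^ m) ^ n := le_self_pow₀ h1 hn.ne'
    have h3 : (m : ℝ) ≤ B.toReal := (int_le_two_zpow m).trans (h2.trans hr)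
    have : m ≤ ⌈B.toReal⌉ := Int.le_ceil _ |> fun hc => by exact_mod_cast h3.trans hc
    exact this.trans (le_max_right _ _)

end IntLemmas

section Weak
variable {n : ℕ}

lemma half_cancel {lam v y : ℝ≥0∞} (hl0 : lam ≠ 0) (hlt : lam ≠ ∞)
    (h : lam / 2 * v ≤ y) : v ≤ 2 / lam * y := by
  have hc0 : lam / 2 ≠ 0 := by simp [ENNReal.div_eq_zero_iff, hl0]
  have hct : lam / 2 ≠ ∞ := (ENNReal.div_lt_top hlt two_ne_zero).ne
  have hinv : (lam / 2)⁻¹ = 2 / lam := ENNReal.inv_div (Or.inr hlt) (Or.inr hl0)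
  calc v = (lam / 2)⁻¹ * (lam / 2 * v) := by
        rw [← mul_assoc, ENNReal.inv_mul_cancel hc0 hct, one_mul]
    _ ≤ (lam / 2)⁻¹ * y := by gcongr
    _ = 2 / lam * y := by rw [hinv]

lemma MS_weak {D : Set (Set (Fin n → ℝ))} (hD : IsDyadicGrid D)
    {Q : ℤ → ℕ → Set (Fin n → ℝ)} (hmem : ∀ k j, Q k j ∈ D ∨ Q k j = ∅)
    {f : (Fin n → ℝ) → ℝ≥0∞} (hf : Measurable f) (Hf : (∫⁻ x, f x ^ 2) ≠ ∞)
    {lam : ℝ≥0∞} (hl0 : lam ≠ 0) (hlt : lam ≠ ∞) :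
    volume {x | lam < MS Q f x} ≤ 2 / lam * ∫⁻ x in {y | lam < 2 * f y}, f x := by
  classical
  set A : Set (Fin n → ℝ) := {y | lam < 2 * f y} with hAdef
  have hA : MeasurableSet A := measurableSet_lt measurable_const (measurable_const.mul hf)
  set S : Set (ℤ × ℕ) := {p | lam * volume (Q p.1 p.2) < ∫⁻ y in Q p.1 p.2, f y} with hSdef
  -- basic facts about cubes in `S`
  have hQm : ∀ p : ℤ × ℕ, MeasurableSet (Q p.1 p.2) := by
    intro p
    rcases hmem p.1 p.2 with h | h
    · obtain ⟨a, k, hak⟩ := hD.cube _ h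
      rw [hak]; exact measurableSet_cubeOf _ _
    · rw [h]; exact MeasurableSet.empty
  have hSpos : ∀ p ∈ S, volume (Q p.1 p.2) ≠ 0 := by
    intro p hp hv
    have h0 : ∫⁻ y in Q p.1 p.2, f y = 0 := setLIntegral_measure_zero _ _ hv
    have := hp
    rw [hSdef] at this
    simp only [Set.mem_setOf_eq, hv, h0, mul_zero] at this
    exact absurd this (lt_irrefl 0)
  have hSD : ∀ p ∈ S, Q p.1 p.2 ∈ D := by
    intro p hp
    rcases hmem p.1 p.2 with h | h
    · exact h
    · exact absurd (by rw [h]; simp : volume (Q p.1 p.2) = 0) (hSpos p hp)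
  have hSfin : ∀ p ∈ S, volume (Q p.1 p.2) < ∞ := by
    intro p hp
    obtain ⟨a, k, hak⟩ := hD.cube _ (hSD p hp)
    rw [hak]; exact volume_cubeOf_lt_top _ _
  -- key estimate on each cube of `S`
  have hkey : ∀ p ∈ S, lam / 2 * volume (Q p.1 p.2) ≤ ∫⁻ x in Q p.1 p.2, A.indicator f x := by
    intro p hp
    have hsplit : ∫⁻ x in Q p.1 p.2, f x
        = (∫⁻ x in Q p.1 p.2, A.indicator f x) + ∫⁻ x in Q p.1 p.2, Aᶜ.indicator f x := by
      rw [← lintegral_add_left (hf.indicator hA)]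
      refine lintegral_congr fun x => ?_
      exact (congrFun (Set.indicator_self_add_compl A f) x).symm
    have hcomp : ∫⁻ x in Q p.1 p.2, Aᶜ.indicator f x ≤ lam / 2 * volume (Q p.1 p.2) := by
      have hb : ∀ x ∈ Q p.1 p.2, Aᶜ.indicator f x ≤ lam / 2 := by
        intro x _
        by_cases hx : x ∈ Aᶜ
        · rw [Set.indicator_of_mem hx]
          have h2 : 2 * f x ≤ lam := not_lt.1 hx
          rw [ENNReal.le_div_iff_mul_le (Or.inl two_ne_zero) (Or.inl ofNat_ne_top), mul_comm]
          exact h2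
        · rw [Set.indicator_of_notMem hx]; exact zero_le
      calc ∫⁻ x in Q p.1 p.2, Aᶜ.indicator f x ≤ ∫⁻ _ in Q p.1 p.2, lam / 2 :=
            setLIntegral_mono' (hQm p) hb
        _ = lam / 2 * volume (Q p.1 p.2) := setLIntegral_const _ _
    have hlt' : lam * volume (Q p.1 p.2) < (∫⁻ x in Q p.1 p.2, A.indicator f x)
        + lam / 2 * volume (Q p.1 p.2) := by
      calc lam * volume (Q p.1 p.2) < ∫⁻ y in Q p.1 p.2, f y := hp
        _ = _ := hsplit
        _ ≤ _ := add_le_add_right hcomp _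
    have hfin2 : lam / 2 * volume (Q p.1 p.2) ≠ ∞ :=
      ENNReal.mul_ne_top (ENNReal.div_lt_top hlt two_ne_zero).ne (hSfin p hp).ne
    have heq : lam * volume (Q p.1 p.2)
        = lam / 2 * volume (Q p.1 p.2) + lam / 2 * volume (Q p.1 p.2) := by
      rw [← add_mul, ENNReal.add_halves]
    rw [heq] at hlt'
    exact (ENNReal.add_le_add_iff_right hfin2).1 hlt'.le
  -- membership description
  have hmem' : ∀ x, lam < MS Q f x → ∃ p ∈ S, x ∈ Q p.1 p.2 := by
    intro x hx
    obtain ⟨p, hxp, havg⟩ := exists_of_lt_MS hx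
    have hne : Q p.1 p.2 ≠ ∅ := Set.nonempty_iff_ne_empty.1 ⟨x, hxp⟩
    have hpD : Q p.1 p.2 ∈ D := (hmem p.1 p.2).resolve_right hne
    obtain ⟨a, k, hak⟩ := hD.cube _ hpD
    have hv0 : volume (Q p.1 p.2) ≠ 0 := by
      rw [hak]; exact (volume_cubeOf_pos _ (zpow_pos two_pos _)).ne'
    have hvt : volume (Q p.1 p.2) ≠ ∞ := by rw [hak]; exact (volume_cubeOf_lt_top _ _).ne
    refine ⟨p, ?_, hxp⟩
    rw [hSdef, Set.mem_setOf_eq]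
    exact (ENNReal.lt_div_iff_mul_lt (Or.inl hv0) (Or.inl hvt)).1 havg
  -- the disjoint subfamily
  obtain ⟨T, hTS, hTcov, hTdisj⟩ : ∃ T : Set (ℤ × ℕ), T ⊆ S ∧
      (∀ x, lam < MS Q f x → ∃ p ∈ T, x ∈ Q p.1 p.2) ∧
      ∀ p ∈ T, ∀ q ∈ T, Q p.1 p.2 = Q q.1 q.2 ∨ Disjoint (Q p.1 p.2) (Q q.1 q.2) := by
    rcases Nat.eq_zero_or_pos n with hn | hn
    · subst hn
      by_cases hS : S.Nonempty
      · obtain ⟨p0, hp0⟩ := hS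
        have hp0u : ∀ z, z ∈ Q p0.1 p0.2 := by
          obtain ⟨y0, hy0⟩ := nonempty_of_measure_ne_zero (hSpos p0 hp0)
          intro z
          have : z = y0 := funext fun i => i.elim0
          rwa [this]
        refine ⟨{p0}, by simpa using hp0, fun x _ => ⟨p0, rfl, hp0u x⟩, ?_⟩
        rintro p rfl q rfl
        exact Or.inl rfl
      · refine ⟨∅, by simp, fun x hx => ?_, by simp⟩
        obtain ⟨p, hpS, _⟩ := hmem' x hx
        exact (hS ⟨p, hpS⟩).elim
    · -- positive dimension: maximal cubes
      have hrep : ∀ p : ℤ × ℕ, p ∈ S → ∃ (a : Fin n → ℝ) (m : ℤ),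
          Q p.1 p.2 = cubeOf a ((2:ℝ) ^ m) := fun p hp => hD.cube _ (hSD p hp)
      choose! Af Mf hAM using hrep
      set B : ℝ≥0∞ := 2 / lam * (2 / lam * ∫⁻ x, f x ^ 2) with hBdef
      have hBt : B ≠ ∞ := by
        have h1 : 2 / lam ≠ ∞ := (ENNReal.div_lt_top ofNat_ne_top hl0).ne
        exact ENNReal.mul_ne_top h1 (ENNReal.mul_ne_top h1 Hf)
      have hVB : ∀ p ∈ S, volume (Q p.1 p.2) ≤ B := by
        intro p hp
        refine half_cancel hl0 hlt ?_
        calc lam / 2 * volume (Q p.1 p.2) ≤ ∫⁻ x in Q p.1 p.2, A.indicator f x := hkey p hp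
          _ ≤ ∫⁻ x, A.indicator f x := setLIntegral_le_lintegral _ _
          _ = ∫⁻ x in A, f x := lintegral_indicator hA f
          _ ≤ 2 / lam * ∫⁻ x, f x ^ 2 := setLintegral_gt_le hf hl0 hlt
      set bd : ℤ := max 0 ⌈B.toReal⌉ with hbddef
      have hMbd : ∀ p ∈ S, Mf p ≤ bd := by
        intro p hp
        refine zpow_exp_bound hn hBt ?_
        rw [← volume_cubeOf, ← hAM p hp]
        exact hVB p hp
      set T : Set (ℤ × ℕ) := {p | p ∈ S ∧ ∀ q ∈ S,
        (Q q.1 q.2 ∩ Q p.1 p.2).Nonempty → Q q.1 q.2 ⊆ Q p.1 p.2} with hTdef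
      have hcov : ∀ x, lam < MS Q f x → ∃ p ∈ T, x ∈ Q p.1 p.2 := by
        intro x hx
        obtain ⟨p1, hp1S, hxp1⟩ := hmem' x hx
        obtain ⟨ms, ⟨ps, ⟨hpsS, hxps⟩, hpsM⟩, hmax⟩ :=
          Int.exists_greatest_of_bdd
            (P := fun m' => ∃ p, (p ∈ S ∧ x ∈ Q p.1 p.2) ∧ Mf p = m')
            (⟨bd, fun z hz => by obtain ⟨p, ⟨hpS, _⟩, hpM⟩ := hz; exact hpM ▸ hMbd p hpS⟩)
            ⟨Mf p1, p1, ⟨hp1S, hxp1⟩, rfl⟩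
        have hmaxcube : ∀ q, q ∈ S → x ∈ Q q.1 q.2 → Q q.1 q.2 ⊆ Q ps.1 ps.2 := by
          intro q hq hxq
          rcases hD.nested _ (hSD q hq) _ (hSD ps hpsS) with hsub | hsup | hdis
          · exact hsub
          · have hle : Mf q ≤ ms := hmax _ ⟨q, ⟨hq, hxq⟩, rfl⟩
            have hcube : cubeOf (Af ps) ((2:ℝ) ^ Mf ps) = cubeOf (Af q) ((2:ℝ) ^ Mf q) := by
              refine cubeOf_subset_rigid (zpow_pos two_pos _) ?_ ?_
              · exact zpow_le_zpow_right₀ one_le_two (by rw [hpsM]; exact hle)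
              · rw [← hAM ps hpsS, ← hAM q hq]; exact hsup
            rw [hAM q hq, hAM ps hpsS, ← hcube]
          · exact absurd (hdis ▸ (Set.mem_inter hxq hxps)) (Set.notMem_empty x)
        refine ⟨ps, ⟨hpsS, ?_⟩, hxps⟩
        intro q hq ⟨y, hy⟩
        rcases hD.nested _ (hSD q hq) _ (hSD ps hpsS) with hsub | hsup | hdis
        · exact hsub
        · exact hmaxcube q hq (hsup hxps)
        · exact absurd (hdis ▸ hy) (Set.notMem_empty y)
      refine ⟨T, fun p hp => hp.1, hcov, ?_⟩
      intro p hp q hq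
      by_cases hpq : (Q p.1 p.2 ∩ Q q.1 q.2).Nonempty
      · refine Or.inl (Set.Subset.antisymm ?_ ?_)
        · exact hq.2 p hp.1 hpq
        · exact hp.2 q hq.1 (by rwa [Set.inter_comm] at hpq)
      · exact Or.inr (Set.disjoint_iff_inter_eq_empty.2
          (Set.not_nonempty_iff_eq_empty.1 hpq))
  -- summing over the disjoint subfamily
  set C : Set (Set (Fin n → ℝ)) := (fun p : ℤ × ℕ => Q p.1 p.2) '' T with hCdef
  have hCc : C.Countable := (Set.to_countable T).image _
  have := hCc.to_subtype
  have hCm : ∀ c : C, MeasurableSet (c : Set (Fin n → ℝ)) := by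
    rintro ⟨c, p, hp, rfl⟩; exact hQm p
  have hCd : Pairwise (Function.onFun Disjoint fun c : C => (c : Set (Fin n → ℝ))) := by
    rintro ⟨c, p, hp, rfl⟩ ⟨c', q, hq, rfl⟩ hne
    rcases hTdisj p hp q hq with heq | hdis
    · exact absurd (Subtype.ext heq) hne
    · exact hdis
  have hsub : {x | lam < MS Q f x} ⊆ ⋃ c : C, (c : Set (Fin n → ℝ)) := by
    intro x hx
    obtain ⟨p, hpT, hxp⟩ := hTcov x hx
    exact Set.mem_iUnion.2 ⟨⟨Q p.1 p.2, ⟨p, hpT, rfl⟩⟩, hxp⟩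
  have hCS : ∀ c : C, ∃ p ∈ S, (c : Set (Fin n → ℝ)) = Q p.1 p.2 := by
    rintro ⟨c, p, hp, rfl⟩; exact ⟨p, hTS hp, rfl⟩
  refine half_cancel hl0 hlt ?_
  calc lam / 2 * volume {x | lam < MS Q f x}
      ≤ lam / 2 * volume (⋃ c : C, (c : Set (Fin n → ℝ))) :=
        mul_le_mul_right (measure_mono hsub) _
    _ = lam / 2 * ∑' c : C, volume (c : Set (Fin n → ℝ)) := by
        rw [measure_iUnion hCd hCm]
    _ = ∑' c : C, lam / 2 * volume (c : Set (Fin n → ℝ)) := ENNReal.tsum_mul_left.symm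
    _ ≤ ∑' c : C, ∫⁻ x in (c : Set (Fin n → ℝ)), A.indicator f x := by
        refine ENNReal.tsum_le_tsum fun c => ?_
        obtain ⟨p, hpS, hcp⟩ := hCS c
        rw [hcp]; exact hkey p hpS
    _ = ∫⁻ x in ⋃ c : C, (c : Set (Fin n → ℝ)), A.indicator f x :=
        (lintegral_iUnion (fun c => hCm c) hCd _).symm
    _ ≤ ∫⁻ x, A.indicator f x := setLIntegral_le_lintegral _ _
    _ = ∫⁻ x in A, f x := lintegral_indicator hA f

end Weak

section L2
variable {n : ℕ}

lemma tsum_zpow_ite (m : ℤ) :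
    ∑' i : ℤ, (if i ≤ m then (2:ℝ≥0∞) ^ i else 0) = 2 ^ (m + 1) := by
  have hinj : Function.Injective (fun j : ℕ => m - (j : ℤ)) := by
    intro a b h
    simp only at h
    omega
  have hsupp : Function.support (fun i : ℤ => (if i ≤ m then (2:ℝ≥0∞) ^ i else 0))
      ⊆ Set.range (fun j : ℕ => m - (j : ℤ)) := by
    intro i hi
    simp only [Function.mem_support] at hi
    have him : i ≤ m := by by_contra h; simp [h] at hi
    exact ⟨(m - i).toNat, by simp only; omega⟩
  rw [← Function.Injective.tsum_eq hinj hsupp]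
  have hterm : ∀ j : ℕ, (if m - (j:ℤ) ≤ m then (2:ℝ≥0∞) ^ (m - (j:ℤ)) else 0)
      = 2 ^ m * (2⁻¹) ^ j := by
    intro j
    rw [if_pos (by omega), ENNReal.zpow_sub two_ne_zero ofNat_ne_top, zpow_natCast]
    rw [ENNReal.inv_pow]
  calc ∑' j : ℕ, (if m - (j:ℤ) ≤ m then (2:ℝ≥0∞) ^ (m - (j:ℤ)) else 0)
      = ∑' j : ℕ, (2:ℝ≥0∞) ^ m * (2⁻¹) ^ j := tsum_congr hterm
    _ = 2 ^ m * ∑' j : ℕ, ((2:ℝ≥0∞)⁻¹) ^ j := ENNReal.tsum_mul_left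
    _ = 2 ^ m * 2 := by rw [ENNReal.tsum_geometric, ENNReal.one_sub_inv_two, inv_inv]
    _ = 2 ^ (m + 1) := by
        rw [ENNReal.zpow_add two_ne_zero ofNat_ne_top m 1, zpow_one]

lemma MS_L2 {D : Set (Set (Fin n → ℝ))} (hD : IsDyadicGrid D)
    {Q : ℤ → ℕ → Set (Fin n → ℝ)} (hmem : ∀ k j, Q k j ∈ D ∨ Q k j = ∅)
    {f : (Fin n → ℝ) → ℝ≥0∞} (hf : Measurable f) :
    ∫⁻ x, MS Q f x ^ 2 ≤ 128 * ∫⁻ x, f x ^ 2 := by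
  by_cases Hf : (∫⁻ x, f x ^ 2) = ∞
  · rw [Hf, ENNReal.mul_top (by norm_num)]; exact le_top
  have hQm : ∀ p : ℤ × ℕ, MeasurableSet (Q p.1 p.2) := by
    intro p
    rcases hmem p.1 p.2 with h | h
    · obtain ⟨a, k, hak⟩ := hD.cube _ h
      rw [hak]; exact measurableSet_cubeOf _ _
    · rw [h]; exact MeasurableSet.empty
  have hg : Measurable (MS Q f) := measurable_MS Q hQm f
  -- MS is a.e. finite
  have hnull : volume {x | MS Q f x = ∞} = 0 := by
    have hb : ∀ k : ℕ, 1 ≤ k →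
        volume {x | MS Q f x = ∞} ≤ (4 * ∫⁻ x, f x ^ 2) * (k : ℝ≥0∞)⁻¹ := by
      intro k hk
      have hk0 : ((k : ℝ≥0∞)) ≠ 0 := by
        simp only [ne_eq, Nat.cast_eq_zero]; omega
      have hkt : ((k : ℝ≥0∞)) ≠ ∞ := ENNReal.natCast_ne_top k
      have hsubset : {x | MS Q f x = ∞} ⊆ {x | (k : ℝ≥0∞) < MS Q f x} := by
        intro x hx
        have hx' : MS Q f x = ∞ := hx
        simp only [Set.mem_setOf_eq, hx']
        exact ENNReal.natCast_lt_top k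
      have halg : 2 / (k:ℝ≥0∞) * (2 / (k:ℝ≥0∞) * ∫⁻ x, f x ^ 2)
          = (4 * ∫⁻ x, f x ^ 2) * ((k:ℝ≥0∞)⁻¹ * (k:ℝ≥0∞)⁻¹) := by
        simp only [div_eq_mul_inv]; ring
      calc volume {x | MS Q f x = ∞} ≤ volume {x | (k : ℝ≥0∞) < MS Q f x} :=
            measure_mono hsubset
        _ ≤ 2 / (k:ℝ≥0∞) * ∫⁻ x in {y | (k:ℝ≥0∞) < 2 * f y}, f x :=
            MS_weak hD hmem hf Hf hk0 hkt
        _ ≤ 2 / (k:ℝ≥0∞) * (2 / (k:ℝ≥0∞) * ∫⁻ x, f x ^ 2) :=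
            mul_le_mul_right (setLintegral_gt_le hf hk0 hkt) _
        _ = (4 * ∫⁻ x, f x ^ 2) * ((k:ℝ≥0∞)⁻¹ * (k:ℝ≥0∞)⁻¹) := halg
        _ ≤ (4 * ∫⁻ x, f x ^ 2) * ((k:ℝ≥0∞)⁻¹ * 1) := by
            gcongr
            exact ENNReal.inv_le_one.2 (by exact_mod_cast hk)
        _ = (4 * ∫⁻ x, f x ^ 2) * (k:ℝ≥0∞)⁻¹ := by rw [mul_one]
    have htend : Filter.Tendsto (fun k : ℕ => (4 * ∫⁻ x, f x ^ 2) * (k : ℝ≥0∞)⁻¹)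
        Filter.atTop (nhds 0) := by
      have h4 : (4 * ∫⁻ x, f x ^ 2) ≠ ∞ := ENNReal.mul_ne_top (by norm_num) Hf
      have := ENNReal.Tendsto.const_mul (a := 4 * ∫⁻ x, f x ^ 2)
        ENNReal.tendsto_inv_nat_nhds_zero (Or.inr h4)
      simpa using this
    have hle : volume {x | MS Q f x = ∞} ≤ 0 :=
      ge_of_tendsto htend (Filter.eventually_atTop.2 ⟨1, fun k hk => hb k hk⟩)
    exact le_antisymm hle (zero_le)
  set w : ℤ → (Fin n → ℝ) → ℝ≥0∞ := fun i x =>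
    ({y | (2:ℝ≥0∞) ^ i < MS Q f y}).indicator (fun _ => (2:ℝ≥0∞) ^ (2*i+4)) x with hwdef
  have hwm : ∀ i : ℤ, Measurable (w i) := fun i =>
    measurable_const.indicator (measurableSet_lt measurable_const hg)
  have claimA : ∀ x, MS Q f x ≠ ∞ → MS Q f x ^ 2 ≤ ∑' i : ℤ, w i x := by
    intro x hxt
    by_cases hx0 : MS Q f x = 0
    · rw [hx0]; simpa using zero_le
    · obtain ⟨i1, hi1⟩ := ENNReal.exists_mem_Ico_zpow hx0 hxt one_lt_two ofNat_ne_top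
      obtain ⟨hi1l, hi1r⟩ := hi1
      refine le_trans ?_ (ENNReal.le_tsum (i1 - 1))
      have hxmem : x ∈ {y | (2:ℝ≥0∞) ^ (i1-1) < MS Q f y} := by
        have ha0 : ((2:ℝ≥0∞) ^ (i1-1)) ≠ 0 := (ENNReal.zpow_pos two_ne_zero ofNat_ne_top _).ne'
        have hat : ((2:ℝ≥0∞) ^ (i1-1)) ≠ ∞ := (ENNReal.zpow_lt_top two_ne_zero ofNat_ne_top _).ne
        have h12 : (2:ℝ≥0∞) ^ (i1-1) < 2 ^ i1 := by
          calc (2:ℝ≥0∞) ^ (i1-1) = 2 ^ (i1-1) * 1 := (mul_one _).symm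
            _ < 2 ^ (i1-1) * 2 := by
                exact (ENNReal.mul_lt_mul_iff_right ha0 hat).2 one_lt_two
            _ = 2 ^ i1 := by
                conv_rhs => rw [show i1 = (i1-1)+1 by ring]
                rw [ENNReal.zpow_add two_ne_zero ofNat_ne_top, zpow_one]
        exact lt_of_lt_of_le h12 hi1l
      rw [hwdef]
      simp only
      rw [Set.indicator_of_mem hxmem]
      have h2 : (2:ℝ≥0∞) ^ (2*(i1-1)+4) = (2 ^ (i1+1)) ^ 2 := by
        rw [show 2*(i1-1)+4 = (i1+1)+(i1+1) by ring,
          ENNReal.zpow_add two_ne_zero ofNat_ne_top, sq]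
      rw [h2]
      exact pow_le_pow_left' hi1r.le 2
  have claimB : ∀ x, f x ≠ ∞ →
      (∑' i : ℤ, (2:ℝ≥0∞) ^ (i+5) * ({y | (2:ℝ≥0∞) ^ i < 2 * f y}).indicator f x)
        ≤ 128 * f x ^ 2 := by
    intro x hxt
    by_cases hx0 : f x = 0
    · have hz : ∀ i : ℤ, (2:ℝ≥0∞) ^ (i+5) * ({y | (2:ℝ≥0∞) ^ i < 2 * f y}).indicator f x = 0 := by
        intro i
        rw [Set.indicator_apply]
        split_ifs with h
        · rw [hx0, mul_zero]
        · rw [mul_zero]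
      rw [tsum_congr hz, tsum_zero]
      exact zero_le
    · have hc0 : (2 : ℝ≥0∞) * f x ≠ 0 := by simp [hx0]
      have hct : (2 : ℝ≥0∞) * f x ≠ ∞ := ENNReal.mul_ne_top ofNat_ne_top hxt
      obtain ⟨i2, hi2⟩ := ENNReal.exists_mem_Ico_zpow hc0 hct one_lt_two ofNat_ne_top
      obtain ⟨hi2l, hi2r⟩ := hi2
      have hterm : ∀ i : ℤ, (2:ℝ≥0∞) ^ (i+5) * ({y | (2:ℝ≥0∞) ^ i < 2 * f y}).indicator f x
          ≤ (if i ≤ i2 then (2:ℝ≥0∞) ^ (i+5) * f x else 0) := by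
        intro i
        rw [Set.indicator_apply]
        split_ifs with h1 h2
        · exact le_rfl
        · exfalso
          have hchain : (2:ℝ≥0∞) ^ i < 2 ^ (i2+1) := lt_trans h1 hi2r
          have : i2 + 1 ≤ i := by omega
          exact absurd hchain (not_lt.2 (ENNReal.zpow_le_of_le one_le_two this))
        · rw [mul_zero]; exact zero_le
        · rw [mul_zero]
      have h32 : (2:ℝ≥0∞) ^ (5:ℤ) = 32 := by
        rw [show (5:ℤ) = ((5:ℕ):ℤ) from rfl, zpow_natCast]
        norm_num
      calc (∑' i : ℤ, (2:ℝ≥0∞) ^ (i+5) * ({y | (2:ℝ≥0∞) ^ i < 2 * f y}).indicator f x)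
          ≤ ∑' i : ℤ, (if i ≤ i2 then (2:ℝ≥0∞) ^ (i+5) * f x else 0) :=
            ENNReal.tsum_le_tsum hterm
        _ = ∑' i : ℤ, ((2:ℝ≥0∞) ^ (5:ℤ) * f x) * (if i ≤ i2 then (2:ℝ≥0∞) ^ i else 0) := by
            refine tsum_congr fun i => ?_
            split_ifs with h
            · rw [ENNReal.zpow_add two_ne_zero ofNat_ne_top i 5]; ring
            · rw [mul_zero]
        _ = ((2:ℝ≥0∞) ^ (5:ℤ) * f x) * ∑' i : ℤ, (if i ≤ i2 then (2:ℝ≥0∞) ^ i else 0) :=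
            ENNReal.tsum_mul_left
        _ = ((2:ℝ≥0∞) ^ (5:ℤ) * f x) * 2 ^ (i2+1) := by rw [tsum_zpow_ite]
        _ ≤ ((2:ℝ≥0∞) ^ (5:ℤ) * f x) * (2 * (2 * f x)) := by
            refine mul_le_mul_right ?_ _
            rw [ENNReal.zpow_add two_ne_zero ofNat_ne_top i2 1, zpow_one]
            calc (2:ℝ≥0∞) ^ i2 * 2 ≤ (2 * f x) * 2 := mul_le_mul_left hi2l 2
              _ = 2 * (2 * f x) := mul_comm _ _
        _ = 128 * f x ^ 2 := by rw [h32, sq]; ring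
  have hfae : ∀ᵐ x, f x ≠ ∞ := by
    have := ae_lt_top (hf.pow_const 2) Hf
    filter_upwards [this] with x hx
    intro hc
    rw [hc, pow_two] at hx
    simp at hx
  have hMSae : ∀ᵐ x, MS Q f x ≠ ∞ := by
    rw [Filter.eventually_iff, mem_ae_iff]
    have hset : {x | MS Q f x ≠ ∞}ᶜ = {x | MS Q f x = ∞} := by
      ext x; simp
    rw [hset]
    exact hnull
  calc ∫⁻ x, MS Q f x ^ 2 ≤ ∫⁻ x, ∑' i : ℤ, w i x := by
        refine lintegral_mono_ae ?_
        filter_upwards [hMSae] with x hx using claimA x hx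
    _ = ∑' i : ℤ, ∫⁻ x, w i x := lintegral_tsum fun i => (hwm i).aemeasurable
    _ ≤ ∑' i : ℤ, ∫⁻ x, (2:ℝ≥0∞) ^ (i+5) * ({y | (2:ℝ≥0∞) ^ i < 2 * f y}).indicator f x := by
        refine ENNReal.tsum_le_tsum fun i => ?_
        have hz0 : ((2:ℝ≥0∞) ^ i) ≠ 0 := (ENNReal.zpow_pos two_ne_zero ofNat_ne_top _).ne'
        have hzt : ((2:ℝ≥0∞) ^ i) ≠ ∞ := (ENNReal.zpow_lt_top two_ne_zero ofNat_ne_top _).ne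
        have hAi : MeasurableSet {y | (2:ℝ≥0∞) ^ i < 2 * f y} :=
          measurableSet_lt measurable_const (measurable_const.mul hf)
        have h1 : (2:ℝ≥0∞) ^ ((1:ℤ)-i) = 2 / 2 ^ i := by
          rw [ENNReal.zpow_sub two_ne_zero ofNat_ne_top, zpow_one]
          rw [div_eq_mul_inv]
        have halg : (2:ℝ≥0∞) ^ (2*i+4) * (2 / 2 ^ i) = 2 ^ (i+5) := by
          rw [← h1, ← ENNReal.zpow_add two_ne_zero ofNat_ne_top,
            show 2*i+4+((1:ℤ)-i) = i+5 by ring]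
        calc ∫⁻ x, w i x = (2:ℝ≥0∞) ^ (2*i+4) * volume {y | (2:ℝ≥0∞) ^ i < MS Q f y} := by
              rw [hwdef]
              simp only
              rw [lintegral_indicator (measurableSet_lt measurable_const hg),
                setLIntegral_const]
          _ ≤ (2:ℝ≥0∞) ^ (2*i+4) * (2 / 2 ^ i * ∫⁻ x in {y | (2:ℝ≥0∞) ^ i < 2 * f y}, f x) :=
              mul_le_mul_right (MS_weak hD hmem hf Hf hz0 hzt) _
          _ = (2:ℝ≥0∞) ^ (i+5) * ∫⁻ x in {y | (2:ℝ≥0∞) ^ i < 2 * f y}, f x := by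
              rw [← mul_assoc, halg]
          _ = ∫⁻ x, (2:ℝ≥0∞) ^ (i+5) * ({y | (2:ℝ≥0∞) ^ i < 2 * f y}).indicator f x := by
              rw [← lintegral_indicator hAi, ← lintegral_const_mul _ (hf.indicator hAi)]
    _ = ∫⁻ x, ∑' i : ℤ, (2:ℝ≥0∞) ^ (i+5) * ({y | (2:ℝ≥0∞) ^ i < 2 * f y}).indicator f x := by
        rw [lintegral_tsum]
        intro i
        exact (measurable_const.mul (hf.indicator
          (measurableSet_lt measurable_const (measurable_const.mul hf)))).aemeasurable
    _ ≤ ∫⁻ x, 128 * f x ^ 2 := by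
        refine lintegral_mono_ae ?_
        filter_upwards [hfae] with x hx using claimB x hx
    _ = 128 * ∫⁻ x, f x ^ 2 := lintegral_const_mul _ (hf.pow_const 2)

end L2

section Core
variable {n : ℕ}

lemma measurableSet_Q {D : Set (Set (Fin n → ℝ))} (hD : IsDyadicGrid D)
    {Q : ℤ → ℕ → Set (Fin n → ℝ)} (hmem : ∀ k j, Q k j ∈ D ∨ Q k j = ∅)
    (p : ℤ × ℕ) : MeasurableSet (Q p.1 p.2) := by
  rcases hmem p.1 p.2 with h | h
  · obtain ⟨a, k, hak⟩ := hD.cube _ h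
    rw [hak]; exact measurableSet_cubeOf _ _
  · rw [h]; exact MeasurableSet.empty

lemma core_est {D : Set (Set (Fin n → ℝ))} (hD : IsDyadicGrid D)
    {Q : ℤ → ℕ → Set (Fin n → ℝ)} (hQ : IsSparseIn D Q)
    {f g F G : (Fin n → ℝ) → ℝ≥0∞} (hg : Measurable g)
    (hF : ∀ p : ℤ × ℕ, ∀ x ∈ Q p.1 p.2,
      (∫⁻ y in Q p.1 p.2, f y) / volume (Q p.1 p.2) ≤ F x)
    (hG : ∀ p : ℤ × ℕ, ∀ x ∈ Q p.1 p.2,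
      (∫⁻ y in Q p.1 p.2, g y) / volume (Q p.1 p.2) ≤ G x) :
    ∫⁻ x, sparseOp Q f x * g x ≤ 2 * ∫⁻ x, F x * G x := by
  classical
  have hQm : ∀ p : ℤ × ℕ, MeasurableSet (Q p.1 p.2) := measurableSet_Q hD hQ.mem
  set E : ℤ × ℕ → Set (Fin n → ℝ) := fun p => Q p.1 p.2 \ ⋃ j, Q (p.1+1) j with hEdef
  have hEm : ∀ p, MeasurableSet (E p) := fun p =>
    (hQm p).diff (MeasurableSet.iUnion fun j => hQm (p.1+1, j))
  have hΩmono : ∀ k l : ℤ, k ≤ l → (⋃ j, Q l j) ⊆ ⋃ j, Q k j := by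
    intro k
    refine Int.le_induction ?_ ?_
    · exact subset_rfl
    · intro l _ ih
      exact (hQ.nest l).trans ih
  have hdisjE : Pairwise (Function.onFun Disjoint E) := by
    have hkey : ∀ p q : ℤ × ℕ, p.1 < q.1 → Disjoint (E p) (E q) := by
      intro p q hlt
      have h1 : E q ⊆ ⋃ j, Q (p.1+1) j := by
        refine Set.diff_subset.trans ?_
        exact (Set.subset_iUnion (fun j => Q q.1 j) q.2).trans (hΩmono (p.1+1) q.1 (by omega))
      have h2 : Disjoint (E p) (⋃ j, Q (p.1+1) j) := Set.disjoint_sdiff_left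
      exact h2.mono_right h1
    rintro ⟨pk, pj⟩ ⟨qk, qj⟩ hpq
    rcases lt_trichotomy pk qk with h | h | h
    · exact hkey _ _ h
    · subst h
      have hj : pj ≠ qj := fun hc => hpq (by rw [hc])
      exact (hQ.disj pk pj qj hj).mono Set.diff_subset Set.diff_subset
    · exact (hkey _ _ h).symm
  have hvol : ∀ p : ℤ × ℕ, Q p.1 p.2 ≠ ∅ → volume (Q p.1 p.2) ≤ 2 * volume (E p) := by
    intro p hne
    have hQD : Q p.1 p.2 ∈ D := (hQ.mem p.1 p.2).resolve_right hne
    obtain ⟨a, k, hak⟩ := hD.cube _ hQD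
    have hvt : volume (Q p.1 p.2) ≠ ∞ := by rw [hak]; exact (volume_cubeOf_lt_top _ _).ne
    have hsp := hQ.sparse p.1 p.2
    have hsub : Q p.1 p.2 ⊆ ((⋃ i, Q (p.1+1) i) ∩ Q p.1 p.2) ∪ E p := by
      intro x hx
      by_cases hxU : x ∈ ⋃ i, Q (p.1+1) i
      · exact Or.inl ⟨hxU, hx⟩
      · exact Or.inr ⟨hx, hxU⟩
    have hle : volume (Q p.1 p.2) ≤ volume (Q p.1 p.2) / 2 + volume (E p) := by
      calc volume (Q p.1 p.2) ≤ volume (((⋃ i, Q (p.1+1) i) ∩ Q p.1 p.2) ∪ E p) :=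
            measure_mono hsub
        _ ≤ volume ((⋃ i, Q (p.1+1) i) ∩ Q p.1 p.2) + volume (E p) := measure_union_le _ _
        _ ≤ volume (Q p.1 p.2) / 2 + volume (E p) := add_le_add_left hsp _
    have hhalf : volume (Q p.1 p.2) / 2 ≤ volume (E p) := by
      have hfin : volume (Q p.1 p.2) / 2 ≠ ∞ := (ENNReal.div_lt_top hvt two_ne_zero).ne
      have hle' : volume (Q p.1 p.2) / 2 + volume (Q p.1 p.2) / 2
          ≤ volume (Q p.1 p.2) / 2 + volume (E p) := by
        rw [ENNReal.add_halves]; exact hle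
      exact (ENNReal.add_le_add_iff_left hfin).1 hle'
    calc volume (Q p.1 p.2) = 2 * (volume (Q p.1 p.2) / 2) :=
          (ENNReal.mul_div_cancel' (by simp) (by simp)).symm
      _ ≤ 2 * volume (E p) := mul_le_mul_right hhalf 2
  have hterm : ∀ p : ℤ × ℕ,
      (∫⁻ y in Q p.1 p.2, f y) / volume (Q p.1 p.2) * ∫⁻ y in Q p.1 p.2, g y
      ≤ 2 * ∫⁻ x in E p, F x * G x := by
    intro p
    by_cases hne : Q p.1 p.2 = ∅
    · rw [hne]
      simp
    · have hQD : Q p.1 p.2 ∈ D := (hQ.mem p.1 p.2).resolve_right hne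
      obtain ⟨a, k, hak⟩ := hD.cube _ hQD
      have hv0 : volume (Q p.1 p.2) ≠ 0 := by
        rw [hak]; exact (volume_cubeOf_pos _ (zpow_pos two_pos _)).ne'
      have hvt : volume (Q p.1 p.2) ≠ ∞ := by rw [hak]; exact (volume_cubeOf_lt_top _ _).ne
      set cf := (∫⁻ y in Q p.1 p.2, f y) / volume (Q p.1 p.2) with hcf
      set cg := (∫⁻ y in Q p.1 p.2, g y) / volume (Q p.1 p.2) with hcg
      calc cf * ∫⁻ y in Q p.1 p.2, g y = cf * (cg * volume (Q p.1 p.2)) := by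
            rw [hcg, ENNReal.div_mul_cancel hv0 hvt]
        _ ≤ cf * (cg * (2 * volume (E p))) := by
            exact mul_le_mul_right (mul_le_mul_right (hvol p hne) _) _
        _ = 2 * (cf * cg * volume (E p)) := by ring
        _ ≤ 2 * ∫⁻ x in E p, F x * G x := by
            refine mul_le_mul_right ?_ 2
            rw [← setLIntegral_const (E p) (cf * cg)]
            refine setLIntegral_mono' (hEm p) fun x hx => ?_
            exact mul_le_mul' (hF p x hx.1) (hG p x hx.1)
  calc ∫⁻ x, sparseOp Q f x * g x
      = ∫⁻ x, ∑' p : ℤ × ℕ,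
          ((Q p.1 p.2).indicator
            (fun _ => (∫⁻ y in Q p.1 p.2, f y) / volume (Q p.1 p.2)) x * g x) := by
        refine lintegral_congr fun x => ?_
        rw [sparseOp, ENNReal.tsum_mul_right]
    _ = ∑' p : ℤ × ℕ, ∫⁻ x,
          (Q p.1 p.2).indicator
            (fun _ => (∫⁻ y in Q p.1 p.2, f y) / volume (Q p.1 p.2)) x * g x :=
        lintegral_tsum fun p => ((measurable_const.indicator (hQm p)).mul hg).aemeasurable
    _ = ∑' p : ℤ × ℕ,
          (∫⁻ y in Q p.1 p.2, f y) / volume (Q p.1 p.2) * ∫⁻ y in Q p.1 p.2, g y := by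
        refine tsum_congr fun p => ?_
        have hind : ∀ x, (Q p.1 p.2).indicator
            (fun _ => (∫⁻ y in Q p.1 p.2, f y) / volume (Q p.1 p.2)) x * g x
            = (Q p.1 p.2).indicator
              (fun y => (∫⁻ y in Q p.1 p.2, f y) / volume (Q p.1 p.2) * g y) x := by
          intro x
          by_cases hx : x ∈ Q p.1 p.2 <;> simp [hx]
        rw [lintegral_congr hind, lintegral_indicator (hQm p), lintegral_const_mul _ hg]
    _ ≤ ∑' p : ℤ × ℕ, 2 * ∫⁻ x in E p, F x * G x := ENNReal.tsum_le_tsum hterm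
    _ = 2 * ∑' p : ℤ × ℕ, ∫⁻ x in E p, F x * G x := ENNReal.tsum_mul_left
    _ = 2 * ∫⁻ x in ⋃ p : ℤ × ℕ, E p, F x * G x := by
        rw [lintegral_iUnion hEm hdisjE]
    _ ≤ 2 * ∫⁻ x, F x * G x := mul_le_mul_right (setLIntegral_le_lintegral _ _) 2

end Core

section Partial
variable {n : ℕ}

noncomputable def partialOp (Q : ℤ → ℕ → Set (Fin n → ℝ)) (f : (Fin n → ℝ) → ℝ≥0∞)
    (s : Finset (ℤ × ℕ)) (x : Fin n → ℝ) : ℝ≥0∞ :=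
  ∑ p ∈ s, (Q p.1 p.2).indicator
    (fun _ => (∫⁻ y in Q p.1 p.2, f y) / volume (Q p.1 p.2)) x

lemma measurable_partialOp {Q : ℤ → ℕ → Set (Fin n → ℝ)}
    (hQm : ∀ p : ℤ × ℕ, MeasurableSet (Q p.1 p.2)) (f : (Fin n → ℝ) → ℝ≥0∞)
    (s : Finset (ℤ × ℕ)) : Measurable (partialOp Q f s) :=
  Finset.measurable_sum s fun p _ => measurable_const.indicator (hQm p)

lemma partialOp_le (Q : ℤ → ℕ → Set (Fin n → ℝ)) (f : (Fin n → ℝ) → ℝ≥0∞)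
    (s : Finset (ℤ × ℕ)) (x : Fin n → ℝ) : partialOp Q f s x ≤ sparseOp Q f x :=
  ENNReal.sum_le_tsum s

lemma partialOp_mono (Q : ℤ → ℕ → Set (Fin n → ℝ)) (f : (Fin n → ℝ) → ℝ≥0∞)
    {s t : Finset (ℤ × ℕ)} (hst : s ⊆ t) (x : Fin n → ℝ) :
    partialOp Q f s x ≤ partialOp Q f t x :=
  Finset.sum_le_sum_of_subset hst

lemma partialOp_sq_lt_top {D : Set (Set (Fin n → ℝ))} (hD : IsDyadicGrid D)
    {Q : ℤ → ℕ → Set (Fin n → ℝ)} (hmem : ∀ k j, Q k j ∈ D ∨ Q k j = ∅)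
    {f : (Fin n → ℝ) → ℝ≥0∞} (Hf : (∫⁻ x, f x ^ 2) ≠ ∞) (s : Finset (ℤ × ℕ)) :
    ∫⁻ x, (partialOp Q f s x) ^ 2 < ∞ := by
  classical
  have hQm : ∀ p : ℤ × ℕ, MeasurableSet (Q p.1 p.2) := measurableSet_Q hD hmem
  induction s using Finset.induction with
  | empty => simp [partialOp]
  | @insert a s ha ih =>
    have hsplit : ∀ x, partialOp Q f (insert a s) x
        = (Q a.1 a.2).indicator
            (fun _ => (∫⁻ y in Q a.1 a.2, f y) / volume (Q a.1 a.2)) x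
          + partialOp Q f s x := fun x => Finset.sum_insert ha
    have hone : ∫⁻ x, ((Q a.1 a.2).indicator
        (fun _ => (∫⁻ y in Q a.1 a.2, f y) / volume (Q a.1 a.2)) x) ^ 2 < ∞ := by
      by_cases hne : Q a.1 a.2 = ∅
      · rw [hne]; simp
      · have hQD : Q a.1 a.2 ∈ D := (hmem a.1 a.2).resolve_right hne
        obtain ⟨b, k, hbk⟩ := hD.cube _ hQD
        have hv0 : volume (Q a.1 a.2) ≠ 0 := by
          rw [hbk]; exact (volume_cubeOf_pos _ (zpow_pos two_pos _)).ne'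
        have hvt : volume (Q a.1 a.2) ≠ ∞ := by
          rw [hbk]; exact (volume_cubeOf_lt_top _ _).ne
        have hIf : (∫⁻ y in Q a.1 a.2, f y) ≠ ∞ := by
          refine (lt_of_le_of_lt (setLintegral_le_sq_add f _) ?_).ne
          exact ENNReal.add_lt_top.2 ⟨Hf.lt_top, hvt.lt_top⟩
        have hc : (∫⁻ y in Q a.1 a.2, f y) / volume (Q a.1 a.2) ≠ ∞ :=
          (ENNReal.div_lt_top hIf hv0).ne
        have hindsq : ∀ x, ((Q a.1 a.2).indicator
            (fun _ => (∫⁻ y in Q a.1 a.2, f y) / volume (Q a.1 a.2)) x) ^ 2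
            = (Q a.1 a.2).indicator
              (fun _ => ((∫⁻ y in Q a.1 a.2, f y) / volume (Q a.1 a.2)) ^ 2) x := by
          intro x
          by_cases hx : x ∈ Q a.1 a.2 <;> simp [hx]
        rw [lintegral_congr hindsq, lintegral_indicator_const (hQm a)]
        exact ENNReal.mul_lt_top (ENNReal.pow_lt_top hc.lt_top) hvt.lt_top
    calc ∫⁻ x, (partialOp Q f (insert a s) x) ^ 2
        ≤ ∫⁻ x, 4 * (((Q a.1 a.2).indicator
            (fun _ => (∫⁻ y in Q a.1 a.2, f y) / volume (Q a.1 a.2)) x) ^ 2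
            + (partialOp Q f s x) ^ 2) := by
          refine lintegral_mono fun x => ?_
          rw [hsplit x]
          exact ennreal_add_sq_le _ _
      _ = 4 * ((∫⁻ x, ((Q a.1 a.2).indicator
            (fun _ => (∫⁻ y in Q a.1 a.2, f y) / volume (Q a.1 a.2)) x) ^ 2)
            + ∫⁻ x, (partialOp Q f s x) ^ 2) := by
          rw [lintegral_const_mul' _ _ (by norm_num : (4:ℝ≥0∞) ≠ ∞),
            lintegral_add_left ((measurable_const.indicator (hQm a)).pow_const 2)]
      _ < ∞ := by
          refine ENNReal.mul_lt_top (by norm_num) ?_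
          exact ENNReal.add_lt_top.2 ⟨hone, ih⟩

lemma sparseOp_sq_eq_iSup {Q : ℤ → ℕ → Set (Fin n → ℝ)}
    (hQm : ∀ p : ℤ × ℕ, MeasurableSet (Q p.1 p.2)) (f : (Fin n → ℝ) → ℝ≥0∞) :
    ∫⁻ x, (sparseOp Q f x) ^ 2
      = ⨆ s : Finset (ℤ × ℕ), ∫⁻ x, (partialOp Q f s x) ^ 2 := by
  have hdir : Directed (· ≤ ·) fun s : Finset (ℤ × ℕ) => fun x => (partialOp Q f s x) ^ 2 := by
    intro s t
    refine ⟨s ∪ t, fun x => ?_, fun x => ?_⟩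
    · exact pow_le_pow_left' (partialOp_mono Q f Finset.subset_union_left x) 2
    · exact pow_le_pow_left' (partialOp_mono Q f Finset.subset_union_right x) 2
  rw [← lintegral_iSup_directed
    (fun s => ((measurable_partialOp hQm f s).pow_const 2).aemeasurable) hdir]
  refine lintegral_congr fun x => ?_
  have h1 : sparseOp Q f x = ⨆ s : Finset (ℤ × ℕ), partialOp Q f s x :=
    ENNReal.tsum_eq_iSup_sum
  rw [h1]
  refine le_antisymm ?_ ?_
  · rw [sq, ENNReal.iSup_mul]
    refine iSup_le fun s => ?_
    rw [ENNReal.mul_iSup]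
    refine iSup_le fun t => ?_
    refine le_iSup_of_le (s ∪ t) ?_
    rw [sq]
    exact mul_le_mul' (partialOp_mono Q f Finset.subset_union_left x)
      (partialOp_mono Q f Finset.subset_union_right x)
  · refine iSup_le fun s => ?_
    exact pow_le_pow_left' (le_iSup (fun s => partialOp Q f s x) s) 2

end Partial


/-- For a sparse family in a dyadic grid and nonnegative `f, g ∈ L²`:
`∫ (A f) g ≤ 2 ∫ (M f)(M g)`, and consequently `‖A f‖_{L²} ≤ C(n) ‖f‖_{L²}`. -/
theorem stmt8 (n : ℕ) :
    ∃ C : ℝ≥0, 0 < C ∧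
      ∀ (D : Set (Set (Fin n → ℝ))), IsDyadicGrid D →
      ∀ (Q : ℤ → ℕ → Set (Fin n → ℝ)), IsSparseIn D Q →
      ∀ (f g : (Fin n → ℝ) → ℝ≥0∞), Measurable f → Measurable g →
      (∫⁻ x, (f x)^2 < ⊤) → (∫⁻ x, (g x)^2 < ⊤) →
      (∫⁻ x, sparseOp Q f x * g x) ≤ 2 * ∫⁻ x, MHL f x * MHL g x ∧
      (∫⁻ x, (sparseOp Q f x)^2)^(1/2 : ℝ) ≤ C * (∫⁻ x, (f x)^2)^(1/2 : ℝ) := by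
  refine ⟨256, by norm_num, ?_⟩
  intro D hD Q hQ f g hf hg hf2 hg2
  have hQm : ∀ p : ℤ × ℕ, MeasurableSet (Q p.1 p.2) := measurableSet_Q hD hQ.mem
  have Hf : (∫⁻ x, f x ^ 2) ≠ ∞ := hf2.ne
  constructor
  · refine core_est hD hQ hg ?_ ?_
    · intro p x hx
      have hne : Q p.1 p.2 ≠ ∅ := Set.nonempty_iff_ne_empty.1 ⟨x, hx⟩
      obtain ⟨a, k, hak⟩ := hD.cube _ ((hQ.mem p.1 p.2).resolve_right hne)
      rw [hak] at hx ⊢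
      exact avg_le_MHL (zpow_pos two_pos k) hx
    · intro p x hx
      have hne : Q p.1 p.2 ≠ ∅ := Set.nonempty_iff_ne_empty.1 ⟨x, hx⟩
      obtain ⟨a, k, hak⟩ := hD.cube _ ((hQ.mem p.1 p.2).resolve_right hne)
      rw [hak] at hx ⊢
      exact avg_le_MHL (zpow_pos two_pos k) hx
  · set H := ∫⁻ x, f x ^ 2 with hH
    have key : ∀ s : Finset (ℤ × ℕ), ∫⁻ x, (partialOp Q f s x) ^ 2 ≤ 65536 * H := by
      intro s
      set X := ∫⁻ x, (partialOp Q f s x) ^ 2 with hX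
      have hXt : X ≠ ∞ := (partialOp_sq_lt_top hD hQ.mem Hf s).ne
      have hrpow2 : ∀ u : ℝ≥0∞, u ^ (2:ℝ) = u ^ 2 := fun u => by
        rw [← ENNReal.rpow_natCast u 2]; norm_num
      have hXle : X ≤ 256 * H ^ (1/2:ℝ) * X ^ (1/2:ℝ) := by
        have h1 : X ≤ ∫⁻ x, sparseOp Q f x * partialOp Q f s x := by
          refine lintegral_mono fun x => ?_
          rw [sq]
          exact mul_le_mul_left (partialOp_le Q f s x) _
        have h2 : ∫⁻ x, sparseOp Q f x * partialOp Q f s x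
            ≤ 2 * ∫⁻ x, MS Q f x * MS Q (partialOp Q f s) x :=
          core_est hD hQ (measurable_partialOp hQm f s)
            (fun p x hx => avg_le_MS Q f hx) (fun p x hx => avg_le_MS Q _ hx)
        have hconj : Real.HolderConjugate 2 2 := Real.HolderConjugate.two_two
        have h3 : ∫⁻ x, MS Q f x * MS Q (partialOp Q f s) x
            ≤ (∫⁻ x, MS Q f x ^ 2) ^ (1/2:ℝ)
              * (∫⁻ x, MS Q (partialOp Q f s) x ^ 2) ^ (1/2:ℝ) := by
          have := ENNReal.lintegral_mul_le_Lp_mul_Lq volume hconj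
            (measurable_MS Q hQm f).aemeasurable
            (measurable_MS Q hQm (partialOp Q f s)).aemeasurable
          simp only [Pi.mul_apply, hrpow2] at this
          exact this
        have h4 : (∫⁻ x, MS Q f x ^ 2) ^ (1/2:ℝ) ≤ (128 * H) ^ (1/2:ℝ) :=
          ENNReal.rpow_le_rpow (MS_L2 hD hQ.mem hf) (by norm_num)
        have h5 : (∫⁻ x, MS Q (partialOp Q f s) x ^ 2) ^ (1/2:ℝ) ≤ (128 * X) ^ (1/2:ℝ) :=
          ENNReal.rpow_le_rpow (MS_L2 hD hQ.mem (measurable_partialOp hQm f s)) (by norm_num)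
        have h128 : ((128:ℝ≥0∞)) ^ (1/2:ℝ) * 128 ^ (1/2:ℝ) = 128 := by
          rw [← ENNReal.rpow_add _ _ (by norm_num) (by norm_num)]
          norm_num
        calc X ≤ ∫⁻ x, sparseOp Q f x * partialOp Q f s x := h1
          _ ≤ 2 * ∫⁻ x, MS Q f x * MS Q (partialOp Q f s) x := h2
          _ ≤ 2 * ((∫⁻ x, MS Q f x ^ 2) ^ (1/2:ℝ)
              * (∫⁻ x, MS Q (partialOp Q f s) x ^ 2) ^ (1/2:ℝ)) := mul_le_mul_right h3 2
          _ ≤ 2 * ((128 * H) ^ (1/2:ℝ) * (128 * X) ^ (1/2:ℝ)) :=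
              mul_le_mul_right (mul_le_mul' h4 h5) 2
          _ = 256 * H ^ (1/2:ℝ) * X ^ (1/2:ℝ) := by
              rw [ENNReal.mul_rpow_of_nonneg _ _ (by norm_num : (0:ℝ) ≤ 1/2),
                ENNReal.mul_rpow_of_nonneg _ _ (by norm_num : (0:ℝ) ≤ 1/2)]
              calc 2 * ((128:ℝ≥0∞) ^ (1/2:ℝ) * H ^ (1/2:ℝ)
                    * ((128:ℝ≥0∞) ^ (1/2:ℝ) * X ^ (1/2:ℝ)))
                  = 2 * ((128:ℝ≥0∞) ^ (1/2:ℝ) * (128:ℝ≥0∞) ^ (1/2:ℝ))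
                    * (H ^ (1/2:ℝ) * X ^ (1/2:ℝ)) := by ring
                _ = 256 * H ^ (1/2:ℝ) * X ^ (1/2:ℝ) := by
                    rw [h128]
                    ring
      by_cases hX0 : X = 0
      · rw [hX0]; exact zero_le
      · have hXr0 : X ^ (1/2:ℝ) ≠ 0 := fun hc =>
          hX0 ((ENNReal.rpow_eq_zero_iff_of_pos (by norm_num : (0:ℝ) < 1/2)).1 hc)
        have hXrt : X ^ (1/2:ℝ) ≠ ∞ := (ENNReal.rpow_lt_top_of_nonneg (by norm_num) hXt).ne
        have hXsplit : X ^ (1/2:ℝ) * X ^ (1/2:ℝ) = X := by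
          rw [← ENNReal.rpow_add _ _ hX0 hXt]
          norm_num
        have hroot : X ^ (1/2:ℝ) ≤ 256 * H ^ (1/2:ℝ) := by
          have hst : X ^ (1/2:ℝ) * X ^ (1/2:ℝ) ≤ (256 * H ^ (1/2:ℝ)) * X ^ (1/2:ℝ) := by
            rw [hXsplit]; exact hXle
          exact (ENNReal.mul_le_mul_iff_left hXr0 hXrt).1 hst
        calc X = X ^ (1/2:ℝ) * X ^ (1/2:ℝ) := hXsplit.symm
          _ ≤ (256 * H ^ (1/2:ℝ)) * (256 * H ^ (1/2:ℝ)) := mul_le_mul' hroot hroot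
          _ = 65536 * (H ^ (1/2:ℝ) * H ^ (1/2:ℝ)) := by ring
          _ ≤ 65536 * H := by
              refine mul_le_mul_right ?_ _
              by_cases hH0 : H = 0
              · rw [hH0, ENNReal.zero_rpow_of_pos (by norm_num)]
                simp
              · rw [← ENNReal.rpow_add _ _ hH0 Hf]
                norm_num
    have hsup : ∫⁻ x, (sparseOp Q f x) ^ 2 ≤ 65536 * H := by
      rw [sparseOp_sq_eq_iSup hQm f]
      exact iSup_le key
    calc (∫⁻ x, (sparseOp Q f x) ^ 2) ^ (1/2:ℝ) ≤ (65536 * H) ^ (1/2:ℝ) :=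
          ENNReal.rpow_le_rpow hsup (by norm_num)
      _ = (65536:ℝ≥0∞) ^ (1/2:ℝ) * H ^ (1/2:ℝ) :=
          ENNReal.mul_rpow_of_nonneg _ _ (by norm_num)
      _ = 256 * H ^ (1/2:ℝ) := by
          congr 1
          rw [show (65536:ℝ≥0∞) = 256 ^ (2:ℕ) by norm_num,
            ← ENNReal.rpow_natCast 256 2, ← ENNReal.rpow_mul]
          norm_num
      _ = ((256:ℝ≥0):ℝ≥0∞) * (∫⁻ x, f x ^ 2) ^ (1/2:ℝ) := by
          norm_num [hH]
end
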